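/- arXiv:0906.4505 — 16 statements merged into one kernel-verified Lean document; each statement's English description precedes it below -/
import Mathlib

section
/- Let A be a commutative ring and E a nonzero A-module. If the trivial ring extension R = A ⋉ E (idealization of E over A) is a valuation ring (i.e., its ideals are totally ordered by inclusion), then A is a valuation domain. -/
universe u

/-- If the trivial ring extension `R = A ⋉ E` of a commutative ring `A` by a nonzero
`A`-module `E` is a valuation ring (divisibility is total), then `A` is a valuation
domain: an integral domain in which divisibility is total. -/
theorem stmt0 (A : Type u) [CommRing A] (E : Type u) [AddCommGroup E] [Module A E]
    [Module Aᵐᵒᵖ E] [IsCentralScalar A E] [Nontrivial E]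
    (hval : ∀ r s : TrivSqZeroExt A E, r ∣ s ∨ s ∣ r) :
    IsDomain A ∧ ∀ a b : A, a ∣ b ∨ b ∣ a := by
  obtain ⟨e₀, he₀⟩ := exists_ne (0 : E)
  have hA : Nontrivial A := by
    refine ⟨1, 0, fun h => he₀ ?_⟩
    calc e₀ = (1 : A) • e₀ := (one_smul A e₀).symm
    _ = (0 : A) • e₀ := by rw [h]
    _ = 0 := zero_smul A e₀
  -- nonzero elements act surjectively on E
  have hsurj : ∀ a : A, a ≠ 0 → ∀ e : E, ∃ f : E, a • f = e := by
    intro a ha e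
    rcases hval (TrivSqZeroExt.inl a) (TrivSqZeroExt.inr e) with ⟨c, hc⟩ | ⟨c, hc⟩
    · refine ⟨c.snd, ?_⟩
      have := congrArg TrivSqZeroExt.snd hc
      simpa using this.symm
    · exfalso
      have := congrArg TrivSqZeroExt.fst hc
      simp at this
      exact ha this
  have hdvd : ∀ a b : A, a ∣ b ∨ b ∣ a := by
    intro a b
    rcases hval (TrivSqZeroExt.inl a) (TrivSqZeroExt.inl b) with ⟨c, hc⟩ | ⟨c, hc⟩
    · left; exact ⟨c.fst, by simpa using congrArg TrivSqZeroExt.fst hc⟩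
    · right; exact ⟨c.fst, by simpa using congrArg TrivSqZeroExt.fst hc⟩
  have hnzd : NoZeroDivisors A := by
    constructor
    intro a b hab
    by_contra h
    push_neg at h
    obtain ⟨ha, hb⟩ := h
    obtain ⟨f, hf⟩ := hsurj a ha e₀
    obtain ⟨g, hg⟩ := hsurj b hb f
    apply he₀
    rw [← hf, ← hg, smul_smul, hab, zero_smul]
  exact ⟨NoZeroDivisors.to_isDomain A, hdvd⟩
end

section
/- Let A be a commutative ring and E a nonzero A-module. If the trivial ring extension R = A ⋉ E is a valuation ring, then E is a uniserial A-module, i.e., for every x, y ∈ E, x ∈ Ay or y ∈ Ax. -/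
universe u

/-- If the trivial ring extension `R = A ⋉ E` of a commutative ring `A` by a nonzero
`A`-module `E` is a valuation ring, then `E` is a uniserial `A`-module: for all
`x y : E`, `x ∈ A y` or `y ∈ A x`. -/
theorem stmt1 (A : Type u) [CommRing A] (E : Type u) [AddCommGroup E] [Module A E]
    [Module Aᵐᵒᵖ E] [IsCentralScalar A E] [Nontrivial E]
    (hval : ∀ r s : TrivSqZeroExt A E, r ∣ s ∨ s ∣ r) :
    ∀ x y : E, (∃ a : A, a • y = x) ∨ (∃ a : A, a • x = y) := by
  intro x y
  rcases hval (.inr x) (.inr y) with ⟨⟨a, e⟩, h⟩ | ⟨⟨a, e⟩, h⟩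
  · right
    refine ⟨a, ?_⟩
    have := congrArg TrivSqZeroExt.snd h
    erw [TrivSqZeroExt.snd_mul] at this
    simpa [TrivSqZeroExt.snd_mul, op_smul_eq_smul] using this.symm
  · left
    refine ⟨a, ?_⟩
    have := congrArg TrivSqZeroExt.snd h
    erw [TrivSqZeroExt.snd_mul] at this
    simpa [TrivSqZeroExt.snd_mul, op_smul_eq_smul] using this.symm
end

section
/- Let A be a valuation domain with field of fractions K. Then the trivial ring extension R = A ⋉ K is a valuation ring. -/
universe u

open TrivSqZeroExt

/-- For elements of the fraction field of a valuation domain, one is an `A`-multiple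
of the other. -/
lemma frac_smul_aux (A : Type u) [CommRing A] [IsDomain A]
    (hA : ∀ a b : A, a ∣ b ∨ b ∣ a) (x y : FractionRing A) :
    (∃ c : A, y = c • x) ∨ (∃ c : A, x = c • y) := by
  rcases eq_or_ne x 0 with hx | hx
  · exact Or.inr ⟨0, by simp [hx]⟩
  rcases eq_or_ne y 0 with hy | hy
  · exact Or.inl ⟨0, by simp [hy]⟩
  obtain ⟨m, n, hn, hxe⟩ := IsFractionRing.div_surjective (A := A) x
  obtain ⟨p, q, hq, hye⟩ := IsFractionRing.div_surjective (A := A) y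
  have hn0 : (algebraMap A (FractionRing A)) n ≠ 0 :=
    IsFractionRing.to_map_ne_zero_of_mem_nonZeroDivisors hn
  have hq0 : (algebraMap A (FractionRing A)) q ≠ 0 :=
    IsFractionRing.to_map_ne_zero_of_mem_nonZeroDivisors hq
  have hm0 : (algebraMap A (FractionRing A)) m ≠ 0 := by
    intro h; apply hx; rw [← hxe, h, zero_div]
  have hp0 : (algebraMap A (FractionRing A)) p ≠ 0 := by
    intro h; apply hy; rw [← hye, h, zero_div]
  rcases hA (m * q) (p * n) with ⟨c, hc⟩ | ⟨c, hc⟩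
  · -- p * n = m * q * c, so y = c • x
    left
    refine ⟨c, ?_⟩
    have := congrArg (algebraMap A (FractionRing A)) hc
    push_cast [map_mul] at this
    rw [← hye, ← hxe, Algebra.smul_def]
    field_simp
    linear_combination this
  · -- m * q = p * n * c, so x = c • y
    right
    refine ⟨c, ?_⟩
    have := congrArg (algebraMap A (FractionRing A)) hc
    push_cast [map_mul] at this
    rw [← hye, ← hxe, Algebra.smul_def]
    field_simp
    linear_combination this

lemma dvd_aux (A : Type u) [CommRing A] [IsDomain A]
    (hA : ∀ a b : A, a ∣ b ∨ b ∣ a) (r s : TrivSqZeroExt A (FractionRing A))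
    (hdvd : r.fst ∣ s.fst) : r ∣ s ∨ s ∣ r := by
  obtain ⟨c, hc⟩ := hdvd
  rcases eq_or_ne r.fst 0 with ha | ha
  · rcases eq_or_ne s.fst 0 with hb | hb
    · -- both have zero first component
      rcases frac_smul_aux A hA r.snd s.snd with ⟨d, hd⟩ | ⟨d, hd⟩
      · left
        refine ⟨inl d + inr 0, TrivSqZeroExt.ext ?_ ?_⟩
        · simp [fst_mul, ha, hb]
        · simp [snd_mul, ha, hd, mul_comm]
      · right
        refine ⟨inl d + inr 0, TrivSqZeroExt.ext ?_ ?_⟩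
        · simp [fst_mul, ha, hb]
        · simp [snd_mul, hb, hd, mul_comm]
    · -- r.fst = 0, s.fst ≠ 0 : s divides r
      right
      have hb0 : (algebraMap A (FractionRing A)) s.fst ≠ 0 := by
        simpa using fun h => hb (IsFractionRing.injective A (FractionRing A) (by simpa using h))
      refine ⟨inl 0 + inr ((algebraMap A (FractionRing A) s.fst)⁻¹ * r.snd), TrivSqZeroExt.ext ?_ ?_⟩
      · simp [fst_mul, ha]
      · simp only [snd_mul, fst_inl, snd_inl, snd_inr, fst_inr, add_zero, zero_add,
          fst_add, snd_add, smul_zero, op_smul_eq_smul]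
        rw [zero_smul, add_zero, Algebra.smul_def]
        field_simp
  · -- r.fst ≠ 0 : r divides s
    left
    have ha0 : (algebraMap A (FractionRing A)) r.fst ≠ 0 := by
      simpa using fun h => ha (IsFractionRing.injective A (FractionRing A) (by simpa using h))
    refine ⟨inl c + inr ((algebraMap A (FractionRing A) r.fst)⁻¹ * (s.snd - c • r.snd)),
      TrivSqZeroExt.ext ?_ ?_⟩
    · simp [fst_mul, hc]
    · simp only [snd_mul, fst_inl, snd_inl, snd_inr, fst_inr, add_zero, zero_add,
        fst_add, snd_add, op_smul_eq_smul]
      simp only [Algebra.smul_def]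
      field_simp
      ring

/-- If `A` is a valuation domain with field of fractions `K`, then the trivial ring
extension `R = A ⋉ K` is a valuation ring. -/
theorem stmt2 (A : Type u) [CommRing A] [IsDomain A]
    (hA : ∀ a b : A, a ∣ b ∨ b ∣ a) :
    ∀ r s : TrivSqZeroExt A (FractionRing A), r ∣ s ∨ s ∣ r := by
  intro r s
  rcases hA r.fst s.fst with h | h
  · exact dvd_aux A hA r s h
  · exact (dvd_aux A hA s r h).symm
end

section
/- Let A be a commutative ring and E a nonzero A-module that is not torsion (i.e., there exists u ∈ E with annihilator (0:u) = 0). If the trivial ring extension R = A ⋉ E is a valuation ring, then A is a valuation domain and E is isomorphic as an A-module to the field of fractions K of A. -/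
universe u

/-- Let `E` be a nonzero non-torsion module (some `u : E` has zero annihilator) over a
commutative ring `A`.  If the trivial ring extension `R = A ⋉ E` is a valuation ring,
then `A` is a valuation domain and `E` is isomorphic to the field of fractions of `A`. -/
theorem stmt3 (A : Type u) [CommRing A] (E : Type u) [AddCommGroup E] [Module A E]
    [Module Aᵐᵒᵖ E] [IsCentralScalar A E] [Nontrivial E]
    (hnt : ∃ u : E, ∀ a : A, a • u = 0 → a = 0)
    (hval : ∀ r s : TrivSqZeroExt A E, r ∣ s ∨ s ∣ r) :
    IsDomain A ∧ (∀ a b : A, a ∣ b ∨ b ∣ a) ∧ Nonempty (E ≃ₗ[A] FractionRing A) := by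
  obtain ⟨u, hu⟩ := hnt
  -- A is nontrivial
  haveI : Nontrivial A := by
    by_contra h
    rw [not_nontrivial_iff_subsingleton] at h
    obtain ⟨x, y, hxy⟩ := exists_pair_ne E
    apply hxy
    have hx : x = (0 : A) • x := by rw [Subsingleton.elim (0 : A) 1, one_smul]
    have hy : y = (0 : A) • y := by rw [Subsingleton.elim (0 : A) 1, one_smul]
    rw [hx, hy, zero_smul, zero_smul]
  have hu0 : u ≠ 0 := fun h => one_ne_zero (hu 1 (by rw [h, smul_zero]))
  -- Useful computations for divisibility in the trivial extension
  have hdvd_inl_inr : ∀ (a : A) (e : E),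
      (TrivSqZeroExt.inl a : TrivSqZeroExt A E) ∣ TrivSqZeroExt.inr e →
      (∃ c : A, a * c = 0) ∧ ∃ g : E, a • g = e := by
    intro a e ⟨c, hc⟩
    constructor
    · exact ⟨c.fst, by simpa using congrArg TrivSqZeroExt.fst hc.symm⟩
    · refine ⟨c.snd, ?_⟩
      have := congrArg TrivSqZeroExt.snd hc
      simpa [TrivSqZeroExt.snd_mul, op_smul_eq_smul] using this.symm
  have hdvd_inr_inl : ∀ (a : A) (e : E),
      (TrivSqZeroExt.inr e : TrivSqZeroExt A E) ∣ TrivSqZeroExt.inl a → a = 0 := by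
    intro a e ⟨c, hc⟩
    have := congrArg TrivSqZeroExt.fst hc
    simpa using this
  have hdvd_inr_inr : ∀ (e f : E),
      (TrivSqZeroExt.inr e : TrivSqZeroExt A E) ∣ TrivSqZeroExt.inr f →
      ∃ c : A, c • e = f := by
    intro e f ⟨c, hc⟩
    refine ⟨c.fst, ?_⟩
    have := congrArg TrivSqZeroExt.snd hc
    simpa [TrivSqZeroExt.snd_mul, op_smul_eq_smul] using this.symm
  -- total divisibility on A
  have hvalA : ∀ a b : A, a ∣ b ∨ b ∣ a := by
    intro a b
    rcases hval (TrivSqZeroExt.inl a) (TrivSqZeroExt.inl b) with ⟨c, hc⟩ | ⟨c, hc⟩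
    · left
      exact ⟨c.fst, by simpa using congrArg TrivSqZeroExt.fst hc⟩
    · right
      exact ⟨c.fst, by simpa using congrArg TrivSqZeroExt.fst hc⟩
  -- no zero divisors
  haveI : NoZeroDivisors A := by
    constructor
    intro a b hab
    by_cases ha : a = 0
    · exact Or.inl ha
    right
    rcases hval (TrivSqZeroExt.inl a) (TrivSqZeroExt.inr u) with h | h
    · obtain ⟨-, g, hg⟩ := hdvd_inl_inr a u h
      apply hu
      rw [← hg, smul_smul, mul_comm, hab, zero_smul]
    · exact absurd (hdvd_inr_inl a u h) ha
  haveI hdom : IsDomain A := NoZeroDivisors.to_isDomain A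
  -- E is torsion-free
  have htf : ∀ (a : A) (e : E), a ≠ 0 → a • e = 0 → e = 0 := by
    intro a e ha hae
    rcases hval (TrivSqZeroExt.inr e) (TrivSqZeroExt.inr u) with h | h
    · obtain ⟨c, hc⟩ := hdvd_inr_inr e u h
      exfalso
      apply ha
      apply hu
      rw [← hc, smul_smul, mul_comm, ← smul_smul, hae, smul_zero]
    · obtain ⟨c, hc⟩ := hdvd_inr_inr u e h
      rw [← hc, smul_smul] at hae
      have : a * c = 0 := hu _ hae
      rcases mul_eq_zero.mp this with h' | h'
      · exact absurd h' ha
      · rw [← hc, h', zero_smul]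
  -- E is divisible
  have hdiv : ∀ (a : A) (e : E), a ≠ 0 → ∃ g : E, a • g = e := by
    intro a e ha
    rcases hval (TrivSqZeroExt.inl a) (TrivSqZeroExt.inr e) with h | h
    · exact (hdvd_inl_inr a e h).2
    · exact absurd (hdvd_inr_inl a e h) ha
  -- the map a ↦ a • u is a localization of A at the nonzerodivisors
  set S := nonZeroDivisors A
  set f : A →ₗ[A] E := LinearMap.toSpanSingleton A E u
  haveI : IsLocalizedModule S f := by
    constructor
    · intro s
      have hs : (s : A) ≠ 0 := nonZeroDivisors.ne_zero s.2
      rw [Module.End.isUnit_iff]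
      constructor
      · intro x y hxy
        simp only [Module.algebraMap_end_apply] at hxy
        have : (s : A) • (x - y) = 0 := by rw [smul_sub, hxy, sub_self]
        have := htf _ _ hs this
        exact sub_eq_zero.mp this
      · intro e
        obtain ⟨g, hg⟩ := hdiv s e hs
        exact ⟨g, by simpa using hg⟩
    · intro e
      rcases hval (TrivSqZeroExt.inr e) (TrivSqZeroExt.inr u) with h | h
      · obtain ⟨c, hc⟩ := hdvd_inr_inr e u h
        have hc0 : c ≠ 0 := by
          intro h0
          rw [h0, zero_smul] at hc
          exact hu0 hc.symm
        refine ⟨⟨1, ⟨c, mem_nonZeroDivisors_of_ne_zero hc0⟩⟩, ?_⟩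
        simpa [f, LinearMap.toSpanSingleton_apply] using hc
      · obtain ⟨c, hc⟩ := hdvd_inr_inr u e h
        exact ⟨⟨c, 1⟩, by simpa [f, LinearMap.toSpanSingleton_apply] using hc.symm⟩
    · intro a b hab
      refine ⟨1, ?_⟩
      simp only [one_smul]
      have : (a - b) • u = 0 := by
        rw [sub_smul, sub_eq_zero]
        simpa [f, LinearMap.toSpanSingleton_apply] using hab
      exact sub_eq_zero.mp (hu _ this)
  refine ⟨hdom, hvalA, ⟨?_⟩⟩
  exact (IsLocalizedModule.iso S f).symm.trans
    (IsLocalizedModule.iso S (Algebra.linearMap A (FractionRing A)))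
end

section
/- Let A be a commutative ring and E a nonzero finitely generated A-module. The trivial ring extension R = A ⋉ E is a valuation ring if and only if A is a field and E is isomorphic to A as an A-module. -/
universe u

/-- Let `E` be a nonzero finitely generated module over a commutative ring `A`.  The
trivial ring extension `R = A ⋉ E` is a valuation ring if and only if `A` is a field
and `E ≃ A` as `A`-modules. -/
theorem stmt4 (A : Type u) [CommRing A] (E : Type u) [AddCommGroup E] [Module A E]
    [Module Aᵐᵒᵖ E] [IsCentralScalar A E] [Nontrivial E] [Module.Finite A E] :
    (∀ r s : TrivSqZeroExt A E, r ∣ s ∨ s ∣ r) ↔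
      IsField A ∧ Nonempty (E ≃ₗ[A] A) := by
  constructor
  · intro h
    -- E is "uniserial" pairwise
    have lem1 : ∀ e f : E, (∃ c : A, c • e = f) ∨ (∃ c : A, c • f = e) := by
      intro e f
      rcases h (.inr e) (.inr f) with ⟨r, hr⟩ | ⟨r, hr⟩
      · left
        refine ⟨r.fst, ?_⟩
        have := congrArg TrivSqZeroExt.snd hr
        simpa [op_smul_eq_smul] using this.symm
      · right
        refine ⟨r.fst, ?_⟩
        have := congrArg TrivSqZeroExt.snd hr
        simpa [op_smul_eq_smul] using this.symm
    -- for every nonzero a, E = aE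
    have lem2 : ∀ a : A, a ≠ 0 → ∀ e : E, ∃ f : E, a • f = e := by
      intro a ha e
      rcases h (.inl a) (.inr e) with ⟨r, hr⟩ | ⟨r, hr⟩
      · refine ⟨r.snd, ?_⟩
        have := congrArg TrivSqZeroExt.snd hr
        simpa using this.symm
      · exfalso
        have := congrArg TrivSqZeroExt.fst hr
        simp at this
        exact ha this
    have hA01 : (0 : A) ≠ 1 := by
      intro h01
      obtain ⟨e, he⟩ := exists_ne (0 : E)
      exact he (by rw [← one_smul A e, ← h01, zero_smul])
    -- A is a field
    have hfield : IsField A := by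
      refine ⟨⟨0, 1, hA01⟩, mul_comm, ?_⟩
      intro a ha
      have hle : (⊤ : Submodule A E) ≤ Ideal.span {a} • ⊤ := by
        intro e _
        obtain ⟨f, hf⟩ := lem2 a ha e
        rw [← hf]
        exact Submodule.smul_mem_smul (Ideal.mem_span_singleton_self a)
          Submodule.mem_top
      obtain ⟨r, hr1, hr2⟩ :=
        Submodule.exists_sub_one_mem_and_smul_eq_zero_of_fg_of_le_smul
          (Ideal.span {a}) ⊤ (Module.Finite.fg_top (R := A) (M := E)) hle
      obtain ⟨c, hc⟩ := Ideal.mem_span_singleton'.mp hr1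
      have hr0 : r = 0 := by
        by_contra hr0
        obtain ⟨e, he⟩ := exists_ne (0 : E)
        obtain ⟨f, hf⟩ := lem2 r hr0 e
        exact he (by rw [← hf]; exact hr2 f Submodule.mem_top)
      refine ⟨-c, ?_⟩
      have : c * a = -1 := by rw [hc, hr0, zero_sub]
      rw [mul_comm, neg_mul, this, neg_neg]
    letI := hfield.toField
    -- E ≃ A
    obtain ⟨e, he⟩ := exists_ne (0 : E)
    have hsurj : Function.Surjective (LinearMap.toSpanSingleton A E e) := by
      intro f
      rcases lem1 e f with ⟨c, hc⟩ | ⟨c, hc⟩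
      · exact ⟨c, hc⟩
      · have hc0 : c ≠ 0 := by rintro rfl; rw [zero_smul] at hc; exact he hc.symm
        exact ⟨c⁻¹, by rw [LinearMap.toSpanSingleton_apply, ← hc, smul_smul,
          inv_mul_cancel₀ hc0, one_smul]⟩
    have hinj : Function.Injective (LinearMap.toSpanSingleton A E e) := by
      intro a b hab
      by_contra hne
      have hab0 : (a - b) • e = 0 := by
        rw [sub_smul, sub_eq_zero]
        exact hab
      have : e = 0 := by
        have h1 := congrArg (fun x => (a - b)⁻¹ • x) hab0
        simpa [smul_smul, inv_mul_cancel₀ (sub_ne_zero.mpr hne)] using h1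
      exact he this
    exact ⟨hfield, ⟨(LinearEquiv.ofBijective (LinearMap.toSpanSingleton A E e)
      ⟨hinj, hsurj⟩).symm⟩⟩
  · rintro ⟨hfield, ⟨ψ⟩⟩
    letI := hfield.toField
    intro r s
    by_cases hr : IsUnit r
    · exact Or.inl (hr.dvd)
    by_cases hs : IsUnit s
    · exact Or.inr (hs.dvd)
    rw [TrivSqZeroExt.isUnit_iff_isUnit_fst, isUnit_iff_ne_zero, not_ne_iff] at hr hs
    by_cases hz : ψ r.snd = 0
    · right
      have : r.snd = 0 := by
        have := congrArg ψ.symm hz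
        simpa using this
      have : r = 0 := TrivSqZeroExt.ext hr this
      rw [this]
      exact dvd_zero s
    · left
      refine ⟨.inl (ψ s.snd / ψ r.snd), ?_⟩
      have hsnd : (ψ s.snd / ψ r.snd) • r.snd = s.snd := by
        apply ψ.injective
        rw [map_smul, smul_eq_mul, div_mul_cancel₀ _ hz]
      refine TrivSqZeroExt.ext ?_ ?_
      · simp [hs, hr]
      · simp only [TrivSqZeroExt.snd_mul, TrivSqZeroExt.snd_inl, TrivSqZeroExt.fst_inl,
          smul_zero, zero_add, op_smul_eq_smul]
        exact hsnd.symm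
end

section
/- Let k be a field, A = k[[x]] the ring of formal power series, and K = k((x)) its field of fractions. Then the trivial ring extension A ⋉ K is a valuation ring. -/
noncomputable instance (k : Type) [Field k] :
    Module (PowerSeries k)ᵐᵒᵖ (LaurentSeries k) :=
  Module.compHom (LaurentSeries k)
    ((algebraMap (PowerSeries k) (LaurentSeries k)).comp
      ((RingHom.id (PowerSeries k)).fromOpposite mul_comm))

instance (k : Type) [Field k] : IsCentralScalar (PowerSeries k) (LaurentSeries k) :=
  ⟨fun r m => by
    show (algebraMap (PowerSeries k) (LaurentSeries k)) r * m = r • m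
    rw [Algebra.smul_def]⟩

set_option synthInstance.maxHeartbeats 1000000 in
/-- For a field `k`, the trivial ring extension of the power series ring `A = k⟦x⟧`
by its field of fractions `K = k((x))` (the Laurent series field) is a valuation ring. -/
theorem stmt6 (k : Type) [Field k] :
    ∀ r s : TrivSqZeroExt (PowerSeries k) (LaurentSeries k), r ∣ s ∨ s ∣ r := by
  intro r s
  have hsd : ∀ (c : PowerSeries k) (m : LaurentSeries k),
      c • m = algebraMap (PowerSeries k) (LaurentSeries k) c * m := fun _ _ => rfl
  have hinj : Function.Injective (algebraMap (PowerSeries k) (LaurentSeries k)) :=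
    IsFractionRing.injective _ _
  have key : ∀ x y : TrivSqZeroExt (PowerSeries k) (LaurentSeries k),
      x.fst ∣ y.fst → x.fst ≠ 0 → x ∣ y := by
    rintro x y ⟨c, hc⟩ hx
    refine ⟨@id (TrivSqZeroExt (PowerSeries k) (LaurentSeries k)) ⟨c, (algebraMap (PowerSeries k) (LaurentSeries k) x.fst)⁻¹ * (y.snd - c • x.snd)⟩, ?_⟩
    have hne : (algebraMap (PowerSeries k) (LaurentSeries k)) x.fst ≠ 0 := fun h =>
      hx (hinj (by simpa using h))
    refine TrivSqZeroExt.ext (by rw [TrivSqZeroExt.fst_mul]; exact hc) ?_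
    rw [TrivSqZeroExt.snd_mul]
    show y.snd = x.fst • ((algebraMap (PowerSeries k) (LaurentSeries k) x.fst)⁻¹ *
      (y.snd - c • x.snd)) + MulOpposite.op c • x.snd
    rw [op_smul_eq_smul, hsd, mul_inv_cancel_left₀ hne]
    ring
  have keyz : ∀ x y : TrivSqZeroExt (PowerSeries k) (LaurentSeries k),
      x.fst = 0 → y.fst = 0 →
      (∃ c : PowerSeries k, y.snd = c • x.snd) → x ∣ y := by
    rintro x y hx hy ⟨c, hc⟩
    refine ⟨@id (TrivSqZeroExt (PowerSeries k) (LaurentSeries k)) ⟨c, 0⟩, TrivSqZeroExt.ext (by rw [TrivSqZeroExt.fst_mul, hx, hy, zero_mul]) ?_⟩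
    rw [TrivSqZeroExt.snd_mul]
    show y.snd = x.fst • (0 : LaurentSeries k) + MulOpposite.op c • x.snd
    rw [op_smul_eq_smul, hsd, hsd, mul_zero, zero_add]
    rw [hsd] at hc
    exact hc
  rcases eq_or_ne r.fst 0 with hr | hr
  · rcases eq_or_ne s.fst 0 with hs | hs
    · rcases eq_or_ne r.snd 0 with hr2 | hr2
      · exact Or.inr (keyz s r hs hr ⟨0, by rw [hr2, hsd, map_zero, zero_mul]⟩)
      rcases eq_or_ne s.snd 0 with hs2 | hs2
      · exact Or.inl (keyz r s hr hs ⟨0, by rw [hs2, hsd, map_zero, zero_mul]⟩)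
      · rcases ((ValuationRing.iff_isInteger_or_isInteger (PowerSeries k)
            (LaurentSeries k)).mp inferInstance) (s.snd * (r.snd)⁻¹) with ⟨c, hc⟩ | ⟨c, hc⟩
        · refine Or.inl (keyz r s hr hs ⟨c, ?_⟩)
          rw [hsd, hc, mul_assoc, inv_mul_cancel₀ hr2, mul_one]
        · refine Or.inr (keyz s r hs hr ⟨c, ?_⟩)
          rw [mul_inv_rev, inv_inv] at hc
          rw [hsd, hc, mul_assoc, inv_mul_cancel₀ hs2, mul_one]
    · exact Or.inr (key s r (hr ▸ dvd_zero _) hs)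
  · rcases eq_or_ne s.fst 0 with hs | hs
    · exact Or.inl (key r s (hs ▸ dvd_zero _) hr)
    · rcases (ValuationRing.iff_dvd_total.mp inferInstance).total r.fst s.fst with h | h
      · exact Or.inl (key r s h hr)
      · exact Or.inr (key s r h hs)
end

section
/- The trivial ring extension ℤ_p ⋉ ℚ_p of the p-adic integers by the p-adic numbers is a valuation ring, for p a prime. -/
noncomputable instance (p : ℕ) [Fact p.Prime] : Module ℤ_[p]ᵐᵒᵖ ℚ_[p] :=
  Module.compHom ℚ_[p] ((algebraMap ℤ_[p] ℚ_[p]).comp ((RingHom.id ℤ_[p]).fromOpposite mul_comm))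

instance (p : ℕ) [Fact p.Prime] : IsCentralScalar ℤ_[p] ℚ_[p] :=
  ⟨fun r m => by
    show (algebraMap ℤ_[p] ℚ_[p]) r * m = r • m
    rw [Algebra.smul_def]⟩

theorem aux_dvd (p : ℕ) [Fact p.Prime] (r s : TrivSqZeroExt ℤ_[p] ℚ_[p])
    (ha : r.fst ≠ 0) (hab : r.fst ∣ s.fst) : r ∣ s := by
  obtain ⟨c, hc⟩ := hab
  have haQ : (r.fst : ℚ_[p]) ≠ 0 := by
    exact_mod_cast fun h => ha (Subtype.ext h)
  refine ⟨(⟨c, (s.snd - (c : ℚ_[p]) * r.snd) / (r.fst : ℚ_[p])⟩ : ℤ_[p] × ℚ_[p]), ?_⟩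
  ext
  · exact hc
  · erw [TrivSqZeroExt.snd_mul, op_smul_eq_smul]
    show s.snd = (r.fst : ℚ_[p]) * ((s.snd - (c : ℚ_[p]) * r.snd) / (r.fst : ℚ_[p]))
        + (c : ℚ_[p]) * r.snd
    field_simp
    ring

theorem aux_dvd0 (p : ℕ) [Fact p.Prime] (r s : TrivSqZeroExt ℤ_[p] ℚ_[p])
    (ha : r.fst = 0) (hb : s.fst = 0) (h : ‖s.snd‖ ≤ ‖r.snd‖) : r ∣ s := by
  rcases eq_or_ne r.snd 0 with hx | hx
  · have : s.snd = 0 := by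
      have := h; rw [hx, norm_zero] at this
      exact norm_le_zero_iff.mp this
    refine ⟨0, ?_⟩
    ext
    · simp [hb]
    · simp [this]
  · have hq : ‖s.snd / r.snd‖ ≤ 1 := by
      rw [norm_div]
      exact div_le_one_of_le₀ h (norm_nonneg _)
    refine ⟨(⟨(⟨s.snd / r.snd, hq⟩ : ℤ_[p]), 0⟩ : ℤ_[p] × ℚ_[p]), ?_⟩
    ext
    · show s.fst = r.fst * _
      rw [ha, hb]
      exact (zero_mul _).symm
    · erw [TrivSqZeroExt.snd_mul, op_smul_eq_smul]
      show s.snd = r.fst • (0:ℚ_[p]) + (s.snd / r.snd) * r.snd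
      rw [smul_zero, zero_add, div_mul_cancel₀ _ hx]

/-- The trivial ring extension `ℤ_p ⋉ ℚ_p` of the `p`-adic integers by the `p`-adic
numbers is a valuation ring. -/
theorem stmt7 (p : ℕ) [Fact p.Prime] :
    ∀ r s : TrivSqZeroExt ℤ_[p] ℚ_[p], r ∣ s ∨ s ∣ r := by
  intro r s
  rcases eq_or_ne r.fst 0 with ha | ha
  · rcases eq_or_ne s.fst 0 with hb | hb
    · rcases le_total ‖s.snd‖ ‖r.snd‖ with h | h
      · exact Or.inl (aux_dvd0 p r s ha hb h)
      · exact Or.inr (aux_dvd0 p s r hb ha h)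
    · exact Or.inr (aux_dvd p s r hb (ha ▸ dvd_zero _))
  · rcases eq_or_ne s.fst 0 with hb | hb
    · exact Or.inl (aux_dvd p r s ha (hb ▸ dvd_zero _))
    · obtain ⟨c, hc | hc⟩ := ValuationRing.cond r.fst s.fst
      · exact Or.inl (aux_dvd p r s ha ⟨c, hc.symm⟩)
      · exact Or.inr (aux_dvd p s r hb ⟨c, hc.symm⟩)
end

section
/- Let A be a commutative ring and E an A-module that is mixed, i.e., E has a nonzero torsion element and a nonzero element with zero annihilator. Then the trivial ring extension A ⋉ E is not a valuation ring. -/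
universe u

/-- If `E` is a mixed `A`-module (it has a nonzero torsion element and a nonzero
element with zero annihilator), then the trivial ring extension `A ⋉ E` is not a
valuation ring. -/
theorem stmt8 (A : Type u) [CommRing A] (E : Type u) [AddCommGroup E] [Module A E]
    [Module Aᵐᵒᵖ E] [IsCentralScalar A E]
    (htor : ∃ x : E, x ≠ 0 ∧ ∃ a : A, a ≠ 0 ∧ a • x = 0)
    (hfree : ∃ u : E, u ≠ 0 ∧ ∀ a : A, a • u = 0 → a = 0) :
    ¬ ∀ r s : TrivSqZeroExt A E, r ∣ s ∨ s ∣ r := by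
  obtain ⟨x, hx, a, ha, hax⟩ := htor
  obtain ⟨u, hu, hfu⟩ := hfree
  intro H
  rcases H (TrivSqZeroExt.inr x) (TrivSqZeroExt.inr u) with ⟨c, hc⟩ | ⟨c, hc⟩
  · -- u = c.fst • x
    have hsnd := congrArg TrivSqZeroExt.snd hc
    simp [TrivSqZeroExt.snd_mul] at hsnd
    -- hsnd : u = c.fst • x (roughly)
    apply ha
    apply hfu
    rw [hsnd, smul_comm, hax, smul_zero]
  · -- x = c.fst • u
    have hsnd := congrArg TrivSqZeroExt.snd hc
    simp [TrivSqZeroExt.snd_mul] at hsnd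
    have hab : a * c.fst = 0 := by
      apply hfu
      rw [mul_smul, ← hsnd, hax]
    rcases H (TrivSqZeroExt.inl c.fst) (TrivSqZeroExt.inr u) with ⟨d, hd⟩ | ⟨d, hd⟩
    · have hsnd' := congrArg TrivSqZeroExt.snd hd
      simp [TrivSqZeroExt.snd_mul] at hsnd'
      -- u = c.fst • d.snd
      apply ha
      apply hfu
      rw [hsnd', smul_smul, hab, zero_smul]
    · have hfst := congrArg TrivSqZeroExt.fst hd
      simp [TrivSqZeroExt.fst_mul] at hfst
      -- c.fst = 0
      apply hx
      rw [hsnd, hfst, zero_smul]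
end

section
/- Let A be a valuation domain which is a non-torsion setting: if R = A ⋉ E is a valuation ring with E nonzero and E non-torsion, then E is a torsion-free A-module. -/
universe u

/-- If the trivial ring extension `R = A ⋉ E` is a valuation ring, where `E` is a
nonzero non-torsion `A`-module, then `E` is torsion-free. -/
theorem stmt9 (A : Type u) [CommRing A] (E : Type u) [AddCommGroup E] [Module A E]
    [Module Aᵐᵒᵖ E] [IsCentralScalar A E] [Nontrivial E]
    (hnt : ∃ u : E, ∀ a : A, a • u = 0 → a = 0)
    (hval : ∀ r s : TrivSqZeroExt A E, r ∣ s ∨ s ∣ r) :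
    ∀ x : E, x ≠ 0 → ∀ a : A, a • x = 0 → a = 0 := by
  obtain ⟨u, hu⟩ := hnt
  intro x hx a hax
  rcases hval (TrivSqZeroExt.inr u) (TrivSqZeroExt.inr x) with ⟨r, hr⟩ | ⟨r, hr⟩
  · -- inr x = inr u * r, so x = r.fst • u
    have hx' : x = r.fst • u := by
      have := congrArg TrivSqZeroExt.snd hr
      simpa [TrivSqZeroExt.snd_mul, op_smul_eq_smul] using this
    have h0 : (a * r.fst) • u = 0 := by
      rw [mul_smul, ← hx', hax]
    have hab : a * r.fst = 0 := hu _ h0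
    rcases hval (TrivSqZeroExt.inl a) (TrivSqZeroExt.inr u) with ⟨s, hs⟩ | ⟨s, hs⟩
    · -- inr u = inl a * s, so u = a • s.snd
      have hu' : u = a • s.snd := by
        have := congrArg TrivSqZeroExt.snd hs
        simpa [TrivSqZeroExt.snd_mul] using this
      exfalso
      apply hx
      rw [hx', hu', smul_smul, mul_comm, hab, zero_smul]
    · -- inl a = inr u * s, fst gives a = 0
      have := congrArg TrivSqZeroExt.fst hs
      simpa [TrivSqZeroExt.fst_mul] using this
  · -- inr u = inr x * r, so u = r.fst • x
    have hu' : u = r.fst • x := by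
      have := congrArg TrivSqZeroExt.snd hr
      simpa [TrivSqZeroExt.snd_mul, op_smul_eq_smul] using this
    apply hu
    rw [hu', smul_smul, mul_comm, ← smul_smul, hax, smul_zero]
end

section
/- Let A be a valuation ring such that for every nonzero zero-divisor a of A, the annihilator ideal (0:a) is not finitely generated. Then every 2-presented A-module has projective dimension at most 1 (i.e., A is a (2,1)-ring). -/
universe u

/-- An `A`-module `M` is `n`-presented if it admits an exact sequence
`F_n → ⋯ → F_0 → M → 0` of finite free modules; equivalently (as defined here
recursively) it is finitely generated for `n = 0`, and for `n+1` there is a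
surjection from a finite free module whose kernel is `n`-presented. -/
def IsNPresented (A : Type u) [CommRing A] : ℕ → ∀ (M : Type u) [AddCommGroup M] [Module A M], Prop
  | 0, M, _, _ => Module.Finite A M
  | n + 1, M, _, _ => ∃ (k : ℕ) (f : (Fin k → A) →ₗ[A] M),
      Function.Surjective f ∧ IsNPresented A n (LinearMap.ker f)

/-- `ProjDimLE A d M` means the projective dimension of `M` over `A` is at most `d`:
`M` is projective for `d = 0`, and for `d+1` there is a surjection from a free
module whose kernel has projective dimension at most `d`. -/
def ProjDimLE (A : Type u) [CommRing A] : ℕ → ∀ (M : Type u) [AddCommGroup M] [Module A M], Prop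
  | 0, M, _, _ => Module.Projective A M
  | d + 1, M, _, _ => ∃ (ι : Type u) (f : (ι →₀ A) →ₗ[A] M),
      Function.Surjective f ∧ ProjDimLE A d (LinearMap.ker f)

section Aux

variable {A : Type u} [CommRing A]


private lemma exists_dvd_all {ι : Type*} (hval : ∀ a b : A, a ∣ b ∨ b ∣ a)
    (s : Finset ι) (hs : s.Nonempty) (f : ι → A) :
    ∃ j ∈ s, ∀ i ∈ s, f j ∣ f i := by
  classical
  induction s using Finset.cons_induction with
  | empty => simp at hs
  | cons a s ha ih =>
    rcases s.eq_empty_or_nonempty with rfl | hs'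
    · exact ⟨a, by simp, by simp⟩
    · obtain ⟨j, hj, hmin⟩ := ih hs'
      rcases hval (f a) (f j) with h | h
      · refine ⟨a, Finset.mem_cons_self _ _, ?_⟩
        intro i hi
        rcases Finset.mem_cons.1 hi with rfl | hi
        · exact dvd_rfl
        · exact h.trans (hmin i hi)
      · refine ⟨j, Finset.mem_cons_of_mem hj, ?_⟩
        intro i hi
        rcases Finset.mem_cons.1 hi with rfl | hi
        · exact h
        · exact hmin i hi


private lemma key (hval : ∀ a b : A, a ∣ b ∨ b ∣ a)
    (hann : ∀ a : A, a ≠ 0 → (∃ b : A, b ≠ 0 ∧ a * b = 0) →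
      ¬ (LinearMap.ker (LinearMap.toSpanSingleton A A a)).FG) :
    ∀ (m k : ℕ) (φ : (Fin m → A) →ₗ[A] (Fin k → A)),
      (LinearMap.ker φ).FG → Module.Projective A (LinearMap.range φ) := by
  classical
  intro m
  induction m with
  | zero =>
    intro k φ _
    have hr : LinearMap.range φ = ⊥ := by
      refine le_bot_iff.mp ?_
      rintro y ⟨x, rfl⟩
      have hx : x = 0 := Subsingleton.elim _ _
      rw [hx, map_zero]
      exact Submodule.zero_mem ⊥
    rw [hr]
    infer_instance
  | succ m IH =>
    intro k φ hker
    set E : Fin (m + 1) → (Fin (m + 1) → A) :=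
      fun j => fun j' => if j = j' then (1 : A) else 0 with hE
    have hφsum : ∀ x, φ x = ∑ j, x j • φ (E j) := fun x =>
      LinearMap.pi_apply_eq_sum_univ φ x
    by_cases h0 : ∀ (j : Fin (m + 1)) (i : Fin k), φ (E j) i = 0
    · have hr : LinearMap.range φ = ⊥ := by
        refine le_bot_iff.mp ?_
        rintro y ⟨x, rfl⟩
        have : ∀ j, φ (E j) = 0 := fun j => funext fun i => h0 j i
        simp [hφsum x, this]
      rw [hr]; infer_instance
    · push_neg at h0
      obtain ⟨j₀, i₀, hj₀⟩ := h0
      obtain ⟨⟨j, i⟩, -, hmin⟩ := exists_dvd_all hval (Finset.univ : Finset (Fin (m+1) × Fin k))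
        ⟨(j₀, i₀), Finset.mem_univ _⟩ (fun p => φ (E p.1) p.2)
      set a : A := φ (E j) i with haa
      have ha0 : a ≠ 0 := by
        intro h
        apply hj₀
        obtain ⟨w, hw⟩ := hmin (j₀, i₀) (Finset.mem_univ _)
        simpa [h] using hw
      -- v : column vector with φ (E j) = a • v
      have hvex : ∀ i', ∃ w, φ (E j) i' = a * w := fun i' => hmin (j, i') (Finset.mem_univ _)
      choose v hv using hvex
      have hEjav : φ (E j) = a • v := funext fun i' => by simpa using hv i'
      -- c : coefficients for other columns at row i
      have hcex : ∀ t : Fin m, ∃ ct, φ (E (j.succAbove t)) i = a * ct :=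
        fun t => hmin (j.succAbove t, i) (Finset.mem_univ _)
      choose c hc using hcex
      set u : Fin m → (Fin (m + 1) → A) := fun t => E (j.succAbove t) - c t • E j with hu
      set L : (Fin m → A) →ₗ[A] (Fin (m + 1) → A) :=
        { toFun := fun x => ∑ t, x t • u t
          map_add' := by
            intro x y
            simp [add_smul, Finset.sum_add_distrib]
          map_smul' := by
            intro r x
            simp [smul_smul, Finset.smul_sum] } with hL
      set ψ : (Fin m → A) →ₗ[A] (Fin k → A) := φ.comp L with hψ
      have hut : ∀ t, φ (u t) i = 0 := by
        intro t
        have : φ (u t) = φ (E (j.succAbove t)) - c t • φ (E j) := by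
          simp [hu, map_sub, map_smul]
        rw [this]
        simp [hc t, mul_comm]
        rw [← haa, sub_self]
      have hψL : ∀ x, ψ x = ∑ t, x t • φ (u t) := by
        intro x
        show φ (L x) = _
        have : L x = ∑ t, x t • u t := rfl
        rw [this, map_sum]
        simp [map_smul]
      have hψi : ∀ x, ψ x i = 0 := by
        intro x
        rw [hψL]
        simp only [Finset.sum_apply, Pi.smul_apply, smul_eq_mul]
        exact Finset.sum_eq_zero fun t _ => by rw [hut t, mul_zero]
      -- the functional lam
      set lam : (Fin (m + 1) → A) →ₗ[A] A :=
        { toFun := fun x => x j + ∑ t, c t * x (j.succAbove t)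
          map_add' := by
            intro x y
            simp [mul_add, Finset.sum_add_distrib]
            ring
          map_smul' := by
            intro r x
            simp [Finset.mul_sum, mul_left_comm, mul_add] } with hlam
      -- σ : restriction
      set σ : (Fin (m + 1) → A) →ₗ[A] (Fin m → A) := LinearMap.funLeft A A j.succAbove with hσ
      have hdecomp : ∀ x, φ x = lam x • φ (E j) + ψ (σ x) := by
        intro x
        rw [hφsum x, Fin.sum_univ_succAbove _ j, hψL]
        have h1 : ∀ t : Fin m, (σ x) t • φ (u t)
            = x (j.succAbove t) • φ (E (j.succAbove t))
              - (c t * x (j.succAbove t)) • φ (E j) := by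
          intro t
          have : φ (u t) = φ (E (j.succAbove t)) - c t • φ (E j) := by
            simp [hu, map_sub, map_smul]
          rw [this]
          show x (j.succAbove t) • _ = _
          rw [smul_sub, smul_smul, mul_comm]
        rw [Finset.sum_congr rfl fun t _ => h1 t]
        show x j • φ (E j) + ∑ t, x (j.succAbove t) • φ (E (j.succAbove t))
          = (x j + ∑ t, c t * x (j.succAbove t)) • φ (E j) + _
        rw [Finset.sum_sub_distrib, add_smul, Finset.sum_smul]
        abel
      -- key kernel coordinate computation
      have hkercoord : ∀ x ∈ LinearMap.ker φ, lam x * a = 0 := by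
        intro x hx
        have h := congrArg (fun y => y i) (hdecomp x)
        simp only [LinearMap.mem_ker.mp hx] at h
        have : (0 : A) = lam x * a + ψ (σ x) i := by simpa using h
        rw [hψi] at this
        simpa using this.symm
      have hsmulzero : ∀ r : A, r * a = 0 → r • φ (E j) = 0 := by
        intro r hr
        rw [hEjav]
        funext i'
        show r * (a * v i') = 0
        rw [← mul_assoc, hr, zero_mul]
      -- (0 : a) is finitely generated
      have hσL : ∀ xt, σ (L xt) = xt := by
        intro xt
        funext t'
        show (∑ t, xt t • u t) (j.succAbove t') = xt t'
        rw [Finset.sum_apply]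
        rw [Finset.sum_eq_single t']
        · have h1 : E (j.succAbove t') (j.succAbove t') = 1 := by simp [hE]
          have h2 : E j (j.succAbove t') = 0 := by
            simp [hE, (Fin.succAbove_ne j t').symm]
          show xt t' * (E (j.succAbove t') (j.succAbove t') - c t' * E j (j.succAbove t')) = xt t'
          rw [h1, h2]; ring
        · intro t _ htt
          have h1 : E (j.succAbove t) (j.succAbove t') = 0 := by
            simp only [hE]
            rw [if_neg]
            exact fun h => htt (Fin.succAbove_right_injective h)
          have h2 : E j (j.succAbove t') = 0 := by
            simp [hE, (Fin.succAbove_ne j t').symm]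
          show xt t * (E (j.succAbove t) (j.succAbove t') - c t * E j (j.succAbove t')) = 0
          rw [h1, h2]; ring
        · intro h; exact absurd (Finset.mem_univ t') h
      have hlamEj : lam (E j) = 1 := by
        show E j j + ∑ t, c t * E j (j.succAbove t) = 1
        have h1 : E j j = 1 := by simp [hE]
        have h2 : ∀ t : Fin m, E j (j.succAbove t) = 0 := fun t => by
          simp [hE, (Fin.succAbove_ne j t).symm]
        simp [h1, h2]
      have hannfg : LinearMap.ker (LinearMap.toSpanSingleton A A a)
          = Submodule.map lam (LinearMap.ker φ) := by
        apply le_antisymm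
        · intro r hr
          have hra : r * a = 0 := by
            have := LinearMap.mem_ker.mp hr
            simpa [LinearMap.toSpanSingleton_apply, smul_eq_mul, mul_comm] using this
          refine ⟨r • E j, ?_, ?_⟩
          · show φ (r • E j) = 0
            rw [map_smul]
            exact hsmulzero r hra
          · rw [map_smul, hlamEj, smul_eq_mul, mul_one]
        · rintro _ ⟨x, hx, rfl⟩
          have := hkercoord x hx
          simp only [LinearMap.mem_ker, LinearMap.toSpanSingleton_apply, smul_eq_mul]
          exact this
      -- a is regular
      have hreg : ∀ b : A, a * b = 0 → b = 0 := by
        intro b hb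
        by_contra hbne
        exact hann a ha0 ⟨b, hbne, hb⟩ (hannfg ▸ hker.map lam)
      -- kernel of ψ is f.g.
      have hkerψ : LinearMap.ker ψ = Submodule.map σ (LinearMap.ker φ) := by
        apply le_antisymm
        · intro xt hxt
          refine ⟨L xt, ?_, hσL xt⟩
          exact hxt
        · rintro _ ⟨x, hx, rfl⟩
          have h1 := hkercoord x hx
          have h2 : lam x • φ (E j) = 0 := hsmulzero _ h1
          have := hdecomp x
          rw [LinearMap.mem_ker.mp hx, h2, zero_add] at this
          exact LinearMap.mem_ker.mpr this.symm
      have hprojψ : Module.Projective A (LinearMap.range ψ) :=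
        IH k ψ (hkerψ ▸ hker.map σ)
      -- the equivalence
      set Θ : (A × (LinearMap.range ψ)) →ₗ[A] (Fin k → A) :=
        (LinearMap.toSpanSingleton A (Fin k → A) (φ (E j))).comp (LinearMap.fst A A _)
          + (LinearMap.range ψ).subtype.comp (LinearMap.snd A A _) with hΘ
      have hΘapp : ∀ (r : A) (w : LinearMap.range ψ), Θ (r, w) = r • φ (E j) + (w : Fin k → A) :=
        fun r w => rfl
      have hΘinj : Function.Injective Θ := by
        rw [← LinearMap.ker_eq_bot]
        refine LinearMap.ker_eq_bot'.mpr ?_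
        rintro ⟨r, w⟩ h
        rw [hΘapp] at h
        have hwi : (w : Fin k → A) i = 0 := by
          obtain ⟨x, hx⟩ := w.2
          rw [← hx]; exact hψi x
        have hcoord := congrArg (fun y => y i) h
        simp only [Pi.add_apply, Pi.smul_apply, smul_eq_mul, Pi.zero_apply, hwi, add_zero] at hcoord
        have hra : a * r = 0 := by rw [mul_comm]; simpa [← haa] using hcoord
        have hr0 : r = 0 := hreg r hra
        subst hr0
        rw [zero_smul, zero_add] at h
        have hw0 : w = 0 := Subtype.ext h
        simp [hw0]
      have hΘrange : LinearMap.range Θ = LinearMap.range φ := by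
        apply le_antisymm
        · rintro _ ⟨⟨r, w⟩, rfl⟩
          rw [hΘapp]
          refine Submodule.add_mem _ ?_ ?_
          · exact ⟨r • E j, by rw [map_smul]⟩
          · obtain ⟨x, hx⟩ := w.2
            exact ⟨L x, hx⟩
        · rintro _ ⟨x, rfl⟩
          exact ⟨(lam x, ⟨ψ (σ x), ⟨σ x, rfl⟩⟩), (hdecomp x).symm⟩
      have e : (A × (LinearMap.range ψ)) ≃ₗ[A] LinearMap.range φ :=
        (LinearEquiv.ofInjective Θ hΘinj).trans (LinearEquiv.ofEq _ _ hΘrange)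
      exact Module.Projective.of_equiv e

end Aux

/-- Let `A` be a valuation ring such that for every nonzero zero-divisor `a`, the
annihilator `(0 : a)` is not a finitely generated ideal.  Then every `2`-presented
`A`-module has projective dimension at most `1`, i.e. `A` is a `(2,1)`-ring. -/
theorem stmt10 (A : Type u) [CommRing A]
    (hval : ∀ a b : A, a ∣ b ∨ b ∣ a)
    (hann : ∀ a : A, a ≠ 0 → (∃ b : A, b ≠ 0 ∧ a * b = 0) →
      ¬ (LinearMap.ker (LinearMap.toSpanSingleton A A a)).FG) :
    ∀ (M : Type u) [AddCommGroup M] [Module A M], IsNPresented A 2 M → ProjDimLE A 1 M := by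
  intro M _ _ hM
  obtain ⟨k, f, hf, hker1⟩ := hM
  obtain ⟨k', g, hg, hfin⟩ := hker1
  have hfg : (LinearMap.ker g).FG := Module.Finite.iff_fg.mp hfin
  set φ : (Fin k' → A) →ₗ[A] (Fin k → A) := (LinearMap.ker f).subtype.comp g with hφ
  have hkφ : LinearMap.ker φ = LinearMap.ker g := by
    rw [hφ, LinearMap.ker_comp, Submodule.ker_subtype, Submodule.comap_bot]
  have hrφ : LinearMap.range φ = LinearMap.ker f := by
    rw [hφ, LinearMap.range_comp, LinearMap.range_eq_top.mpr hg, Submodule.map_top,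
      Submodule.range_subtype]
  have hproj : Module.Projective A (LinearMap.ker f) := by
    have h := key hval hann k' k φ (hkφ ▸ hfg)
    rwa [hrφ] at h
  set e : (ULift.{u} (Fin k) →₀ A) ≃ₗ[A] (Fin k → A) :=
    (Finsupp.linearEquivFunOnFinite A A (ULift.{u} (Fin k))).trans
      (LinearEquiv.funCongrLeft A A Equiv.ulift).symm with he
  refine ⟨ULift.{u} (Fin k), f.comp e.toLinearMap, hf.comp e.surjective, ?_⟩
  show Module.Projective A (LinearMap.ker (f.comp e.toLinearMap))
  have hk : LinearMap.ker (f.comp e.toLinearMap)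
      = Submodule.comap e.toLinearMap (LinearMap.ker f) := by
    rw [LinearMap.ker_comp]
  have e2 : (LinearMap.ker (f.comp e.toLinearMap)) ≃ₗ[A] (LinearMap.ker f) := by
    rw [hk]
    exact e.ofSubmodule' (LinearMap.ker f)
  haveI := hproj
  exact Module.Projective.of_equiv e2.symm
end

section
/- Let A be a valuation ring and suppose there exists a nonzero zero-divisor a ∈ A such that the annihilator (0:a) is a finitely generated ideal. Then the A-module A/aA is 2-presented and has infinite projective dimension; consequently A is not a (2,d)-ring for any nonnegative integer d. -/
universe u

section Aux

open LinearMap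

variable {A : Type u} [CommRing A]
variable {M N P : Type u} [AddCommGroup M] [Module A M] [AddCommGroup N] [Module A N]
  [AddCommGroup P] [Module A P]

/-- A split surjection induces a decomposition `M ≃ ker π × N`. -/
noncomputable def splitEquiv (π : M →ₗ[A] N) (s : N →ₗ[A] M) (hs : ∀ n, π (s n) = n) :
    M ≃ₗ[A] (LinearMap.ker π × N) where
  toFun x := (⟨x - s (π x), by simp [LinearMap.mem_ker, hs]⟩, π x)
  invFun p := p.1.1 + s p.2
  map_add' x y := by
    refine Prod.ext (Subtype.ext ?_) (by simp)
    simp only [map_add, Prod.fst_add, Submodule.coe_add]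
    abel
  map_smul' r x := by
    refine Prod.ext (Subtype.ext ?_) (by simp)
    simp only [map_smul, RingHom.id_apply, Prod.smul_fst, SetLike.val_smul, smul_sub]
  left_inv x := by simp
  right_inv p := by
    obtain ⟨⟨k, hk⟩, n⟩ := p
    have hk0 : π k = 0 := hk
    refine Prod.ext (Subtype.ext ?_) ?_ <;> simp [hs, hk0]

noncomputable def kerCompEquiv (e : M ≃ₗ[A] N) (f : N →ₗ[A] P) :
    LinearMap.ker (f ∘ₗ (e : M →ₗ[A] N)) ≃ₗ[A] LinearMap.ker f :=
  (e.submoduleMap _).trans (LinearEquiv.ofEq _ _ (by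
    rw [LinearMap.ker_comp, Submodule.map_comap_eq, LinearEquiv.range, top_inf_eq]))

noncomputable def prodEmptyEquiv {M' : Type u} [AddCommMonoid M'] [Module A M'] :
    M' ≃ₗ[A] (M' × (PEmpty.{u+1} →₀ A)) where
  toFun m := (m, 0)
  invFun p := p.1
  map_add' x y := Prod.ext rfl (Subsingleton.elim _ _)
  map_smul' r x := Prod.ext rfl (Subsingleton.elim _ _)
  left_inv x := rfl
  right_inv p := Prod.ext rfl (Subsingleton.elim _ _)


section Pullback

variable (f : M →ₗ[A] P) (g : N →ₗ[A] P)

/-- The pullback submodule used in Schanuel's lemma. -/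
noncomputable abbrev pullD : (M × N) →ₗ[A] P :=
  (f ∘ₗ LinearMap.fst A M N) - (g ∘ₗ LinearMap.snd A M N)

noncomputable def pullbackFstEquiv [Module.Projective A M] (hg : Function.Surjective g) :
    LinearMap.ker (pullD f g) ≃ₗ[A] (LinearMap.ker g × M) := by
  let h := (Module.projective_lifting_property g f hg).choose
  have hh := (Module.projective_lifting_property g f hg).choose_spec
  let π : LinearMap.ker (pullD f g) →ₗ[A] M :=
    LinearMap.fst A M N ∘ₗ (LinearMap.ker (pullD f g)).subtype
  let s : M →ₗ[A] LinearMap.ker (pullD f g) :=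
    LinearMap.codRestrict _ (LinearMap.prod LinearMap.id h) (fun u => by
      have h1 : g (h u) = f u := LinearMap.congr_fun hh u
      simp [LinearMap.mem_ker, h1])
  have hs : ∀ u, π (s u) = u := fun u => rfl
  refine (splitEquiv π s hs).trans (LinearEquiv.prodCongr ?_ (LinearEquiv.refl A M))
  -- ker π ≃ ker g
  refine LinearEquiv.ofLinear
    (LinearMap.codRestrict _ (LinearMap.snd A M N ∘ₗ (LinearMap.ker (pullD f g)).subtype ∘ₗ
      (LinearMap.ker π).subtype) ?_)
    (LinearMap.codRestrict _ (LinearMap.codRestrict _ (LinearMap.inr A M N ∘ₗ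
      (LinearMap.ker g).subtype) ?_) ?_) ?_ ?_
  · intro x
    have hx1 : f (x.1.1 : M × N).1 - g (x.1.1 : M × N).2 = 0 := x.1.2
    have hx2 : (x.1.1 : M × N).1 = 0 := x.2
    simp only [LinearMap.mem_ker, LinearMap.comp_apply, Submodule.subtype_apply,
      LinearMap.snd_apply]
    rw [hx2, map_zero, zero_sub, neg_eq_zero] at hx1
    exact hx1
  · intro y
    have : g y.1 = 0 := y.2
    simp [LinearMap.mem_ker, this]
  · intro y
    rfl
  · ext y
    rfl
  · ext x
    · exact (x.2 : (x.1.1 : M × N).1 = 0).symm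
    · rfl

noncomputable def pullbackSndEquiv [Module.Projective A N] (hf : Function.Surjective f) :
    LinearMap.ker (pullD f g) ≃ₗ[A] (LinearMap.ker f × N) := by
  let h := (Module.projective_lifting_property f g hf).choose
  have hh := (Module.projective_lifting_property f g hf).choose_spec
  let π : LinearMap.ker (pullD f g) →ₗ[A] N :=
    LinearMap.snd A M N ∘ₗ (LinearMap.ker (pullD f g)).subtype
  let s : N →ₗ[A] LinearMap.ker (pullD f g) :=
    LinearMap.codRestrict _ (LinearMap.prod h LinearMap.id) (fun u => by
      have h1 : f (h u) = g u := LinearMap.congr_fun hh u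
      simp [LinearMap.mem_ker, h1])
  have hs : ∀ u, π (s u) = u := fun u => rfl
  refine (splitEquiv π s hs).trans (LinearEquiv.prodCongr ?_ (LinearEquiv.refl A N))
  refine LinearEquiv.ofLinear
    (LinearMap.codRestrict _ (LinearMap.fst A M N ∘ₗ (LinearMap.ker (pullD f g)).subtype ∘ₗ
      (LinearMap.ker π).subtype) ?_)
    (LinearMap.codRestrict _ (LinearMap.codRestrict _ (LinearMap.inl A M N ∘ₗ
      (LinearMap.ker f).subtype) ?_) ?_) ?_ ?_
  · intro x
    have hx1 : f (x.1.1 : M × N).1 - g (x.1.1 : M × N).2 = 0 := x.1.2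
    have hx2 : (x.1.1 : M × N).2 = 0 := x.2
    simp only [LinearMap.mem_ker, LinearMap.comp_apply, Submodule.subtype_apply,
      LinearMap.fst_apply]
    rw [hx2, map_zero, sub_zero] at hx1
    exact hx1
  · intro y
    have : f y.1 = 0 := y.2
    simp [LinearMap.mem_ker, this]
  · intro y
    rfl
  · ext y
    rfl
  · ext x
    · rfl
    · exact (x.2 : (x.1.1 : M × N).2 = 0).symm

/-- Schanuel's lemma. -/
noncomputable def schanuelEquiv [Module.Projective A M] [Module.Projective A N]
    (hf : Function.Surjective f) (hg : Function.Surjective g) :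
    (LinearMap.ker f × N) ≃ₗ[A] (LinearMap.ker g × M) :=
  (pullbackSndEquiv f g hf).symm.trans (pullbackFstEquiv f g hg)

end Pullback


set_option maxHeartbeats 2000000 in

noncomputable def kerCompLeftEquiv (e : N ≃ₗ[A] P) (f : M →ₗ[A] N) :
    LinearMap.ker (e.toLinearMap ∘ₗ f) ≃ₗ[A] LinearMap.ker f :=
  LinearEquiv.ofEq _ _ (by
    rw [LinearMap.ker_comp, LinearEquiv.ker, Submodule.comap_bot])

noncomputable def kerProdMapIdEquiv (f : M →ₗ[A] N) :
    LinearMap.ker (f.prodMap (LinearMap.id : P →ₗ[A] P)) ≃ₗ[A] LinearMap.ker f := by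
  refine LinearEquiv.ofLinear
    (LinearMap.codRestrict _ (LinearMap.fst A M P ∘ₗ
      (LinearMap.ker (f.prodMap (LinearMap.id : P →ₗ[A] P))).subtype) ?_)
    (LinearMap.codRestrict _ (LinearMap.inl A M P ∘ₗ (LinearMap.ker f).subtype) ?_) ?_ ?_
  · intro x
    have hx : (f.prodMap LinearMap.id) x.1 = 0 := x.2
    exact congrArg Prod.fst hx
  · intro y
    have hy : f y.1 = 0 := y.2
    show (f.prodMap (LinearMap.id : P →ₗ[A] P)) (y.1, 0) = 0
    simp [LinearMap.prodMap_apply, hy]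
  · exact LinearMap.ext fun y => Subtype.ext rfl
  · refine LinearMap.ext fun x => Subtype.ext (Prod.ext rfl ?_)
    have hx : (f.prodMap LinearMap.id) x.1 = 0 := x.2
    exact (congrArg Prod.snd hx).symm

noncomputable def kerFstSplitEquiv {K W : Type u} [AddCommGroup K] [Module A K]
    [AddCommGroup W] [Module A W] [Module.Projective A K]
    (r : W →ₗ[A] (M × K)) (hr : Function.Surjective r) :
    LinearMap.ker (LinearMap.fst A M K ∘ₗ r) ≃ₗ[A] (LinearMap.ker r × K) := by
  let π : LinearMap.ker (LinearMap.fst A M K ∘ₗ r) →ₗ[A] K :=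
    LinearMap.snd A M K ∘ₗ r ∘ₗ (LinearMap.ker (LinearMap.fst A M K ∘ₗ r)).subtype
  have hπ : Function.Surjective π := by
    intro w
    obtain ⟨v, hv⟩ := hr (0, w)
    have hvm : v ∈ LinearMap.ker (LinearMap.fst A M K ∘ₗ r) := by
      show (r v).1 = 0
      rw [hv]
    refine ⟨⟨v, hvm⟩, ?_⟩
    show (r v).2 = w
    rw [hv]
  let s := (Module.projective_lifting_property π LinearMap.id hπ).choose
  have hs := (Module.projective_lifting_property π LinearMap.id hπ).choose_spec
  have hs' : ∀ n, π (s n) = n := fun n => LinearMap.congr_fun hs n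
  refine (splitEquiv π s hs').trans (LinearEquiv.prodCongr ?_ (LinearEquiv.refl A K))
  -- ker π ≃ ker r
  have memlem : ∀ x : LinearMap.ker π, r (x.1.1 : W) = 0 := by
    intro x
    have h1 : (r x.1.1).1 = 0 := x.1.2
    have h2 : (r x.1.1).2 = 0 := x.2
    exact Prod.ext h1 h2
  refine LinearEquiv.ofLinear
    (LinearMap.codRestrict _ ((LinearMap.ker (LinearMap.fst A M K ∘ₗ r)).subtype ∘ₗ
      (LinearMap.ker π).subtype) (fun x => memlem x))
    (LinearMap.codRestrict _ (LinearMap.codRestrict _ (LinearMap.ker r).subtype ?_) ?_) ?_ ?_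
  · intro y
    have hy : r y.1 = 0 := y.2
    show (r y.1).1 = 0
    rw [hy]
    rfl
  · intro y
    have hy : r y.1 = 0 := y.2
    show (r y.1).2 = 0
    rw [hy]
    rfl
  · exact LinearMap.ext fun y => Subtype.ext rfl
  · exact LinearMap.ext fun x => Subtype.ext (Subtype.ext rfl)

theorem stab (A : Type u) [CommRing A] :
    ∀ (d : ℕ) (X Y ι κ : Type u) [AddCommGroup X] [Module A X] [AddCommGroup Y] [Module A Y],
      ((X × (ι →₀ A)) ≃ₗ[A] (Y × (κ →₀ A))) → ProjDimLE A d X → ProjDimLE A d Y := by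
  intro d
  induction d with
  | zero =>
    intro X Y ι κ _ _ _ _ e hX
    have hX' : Module.Projective A X := hX
    have h2 : Module.Projective A (Y × (κ →₀ A)) := Module.Projective.of_equiv e
    exact Module.Projective.of_split (LinearMap.inl A Y (κ →₀ A))
      (LinearMap.fst A Y (κ →₀ A)) (LinearMap.ext fun y => rfl)
  | succ d ih =>
    intro X Y ι κ _ _ _ _ e hX
    obtain ⟨σ, f, hf, hker⟩ := hX
    let q : ((σ →₀ A) × (ι →₀ A)) →ₗ[A] (Y × (κ →₀ A)) :=
      e.toLinearMap ∘ₗ (f.prodMap LinearMap.id)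
    have hq : Function.Surjective q := by
      intro p
      obtain ⟨p', rfl⟩ := e.surjective p
      obtain ⟨x, hx⟩ := hf p'.1
      refine ⟨(x, p'.2), ?_⟩
      show e ((f.prodMap LinearMap.id) (x, p'.2)) = e p'
      congr 1
      exact Prod.ext hx rfl
    let g0 : ((σ →₀ A) × (ι →₀ A)) →ₗ[A] Y := LinearMap.fst A Y (κ →₀ A) ∘ₗ q
    have hg0 : Function.Surjective g0 := Prod.fst_surjective.comp hq
    have E1 : LinearMap.ker g0 ≃ₗ[A] (LinearMap.ker q × (κ →₀ A)) := kerFstSplitEquiv q hq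
    have E2 : LinearMap.ker q ≃ₗ[A] LinearMap.ker f :=
      (kerCompLeftEquiv e (f.prodMap LinearMap.id)).trans (kerProdMapIdEquiv f)
    let E : ((σ ⊕ ι) →₀ A) ≃ₗ[A] ((σ →₀ A) × (ι →₀ A)) :=
      Finsupp.sumFinsuppLEquivProdFinsupp A
    let g : ((σ ⊕ ι) →₀ A) →ₗ[A] Y := g0 ∘ₗ (E : ((σ ⊕ ι) →₀ A) →ₗ[A] _)
    have E3 : LinearMap.ker g ≃ₗ[A] LinearMap.ker g0 := kerCompEquiv E g0
    have Ebig : (LinearMap.ker f × (κ →₀ A)) ≃ₗ[A]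
        (LinearMap.ker g × (PEmpty.{u+1} →₀ A)) :=
      (LinearEquiv.prodCongr E2.symm (LinearEquiv.refl A (κ →₀ A))).trans
        (E1.symm.trans (E3.symm.trans (prodEmptyEquiv (M' := LinearMap.ker g))))
    exact ⟨σ ⊕ ι, g, hg0.comp E.surjective, ih _ _ κ PEmpty.{u+1} Ebig hker⟩

end Aux

section Main

variable {A : Type u} [CommRing A]

theorem unit_of_nonunit (hval : ∀ a b : A, a ∣ b ∨ b ∣ a) {m : A}
    (hm : ¬ IsUnit m) : IsUnit (1 - m) := by
  rcases hval m (1 - m) with ⟨t, ht⟩ | ⟨t, ht⟩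
  · exact absurd (IsUnit.of_mul_eq_one (a := m) (1 + t) (by linear_combination -ht)) hm
  · exact IsUnit.of_mul_eq_one (1 + t) (by linear_combination -ht)

theorem fg_principal (hval : ∀ a b : A, a ∣ b ∨ b ∣ a) {N : Submodule A A} (hN : N.FG) :
    ∃ c, N = Ideal.span {c} := by
  refine Submodule.fg_induction (motive := fun N _ => ∃ c, N = Ideal.span {c}) ?_ ?_ N hN
  · intro x
    exact ⟨x, by rw [Ideal.submodule_span_eq]⟩
  · rintro M₁ M₂ _ _ ⟨c₁, rfl⟩ ⟨c₂, rfl⟩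
    rcases hval c₁ c₂ with h | h
    · exact ⟨c₁, sup_eq_left.mpr (Ideal.span_singleton_le_span_singleton.mpr h)⟩
    · exact ⟨c₂, sup_eq_right.mpr (Ideal.span_singleton_le_span_singleton.mpr h)⟩

noncomputable def quotAnnEquiv (x y : A)
    (hann : LinearMap.ker (LinearMap.toSpanSingleton A A x) = Ideal.span {y}) :
    (A ⧸ Ideal.span {y}) ≃ₗ[A]
      LinearMap.ker (Submodule.mkQ (Ideal.span {x} : Submodule A A)) :=
  (Submodule.quotEquivOfEq _ _ hann.symm).trans
    ((LinearMap.toSpanSingleton A A x).quotKerEquivRange.trans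
      (LinearEquiv.ofEq _ _ (by
        rw [← LinearMap.span_singleton_eq_range, Ideal.submodule_span_eq,
          Submodule.ker_mkQ])))

theorem pd_step (x y : A)
    (hann : LinearMap.ker (LinearMap.toSpanSingleton A A x) = Ideal.span {y}) (d : ℕ)
    (h : ProjDimLE A (d + 1) (A ⧸ Ideal.span {x})) :
    ProjDimLE A d (A ⧸ Ideal.span {y}) := by
  obtain ⟨ι, f, hf, hker⟩ := h
  have sch := schanuelEquiv f (Submodule.mkQ (Ideal.span {x} : Submodule A A)) hf
    (Submodule.mkQ_surjective _)
  have eq1 : (LinearMap.ker f × (PUnit.{u+1} →₀ A)) ≃ₗ[A]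
      ((A ⧸ Ideal.span {y}) × (ι →₀ A)) :=
    (LinearEquiv.prodCongr (LinearEquiv.refl A _)
        (Finsupp.LinearEquiv.finsuppUnique A A PUnit.{u+1})).trans
      (sch.trans (LinearEquiv.prodCongr (quotAnnEquiv x y hann).symm (LinearEquiv.refl A _)))
  exact stab A d _ _ _ _ eq1 hker

theorem pd_base (hval : ∀ a b : A, a ∣ b ∨ b ∣ a) (x y : A)
    (hx : x ≠ 0) (hy : y ≠ 0) (hxy : x * y = 0)
    (hann : LinearMap.ker (LinearMap.toSpanSingleton A A x) = Ideal.span {y}) :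
    ¬ ProjDimLE A 0 (A ⧸ Ideal.span {x}) := by
  intro h
  have hproj : Module.Projective A (A ⧸ Ideal.span {x}) := h
  obtain ⟨s, hs⟩ := Module.projective_lifting_property
    (Ideal.span {x} : Submodule A A).mkQ LinearMap.id (Submodule.mkQ_surjective _)
  set Q := (Ideal.span {x} : Submodule A A).mkQ with hQ
  set c : A := 1 - s (Q 1) with hc
  have hmkc : Q c = 0 := by
    have h1 := LinearMap.congr_fun hs (Q 1)
    simp only [LinearMap.comp_apply, LinearMap.id_apply] at h1
    rw [hc, map_sub, h1, sub_self]
  have hcx : x ∣ c := by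
    have hmem : c ∈ (Ideal.span {x} : Submodule A A) := by
      rw [← Submodule.ker_mkQ (Ideal.span {x} : Submodule A A), LinearMap.mem_ker]
      exact hmkc
    exact Ideal.mem_span_singleton.mp hmem
  have hmkx : Q x = 0 := by
    rw [hQ, ← LinearMap.mem_ker, Submodule.ker_mkQ]
    exact Ideal.mem_span_singleton_self x
  have h2 : x * s (Q 1) = 0 := by
    have h3 : x • s (Q 1) = s (Q x) := by
      rw [← map_smul, ← map_smul, smul_eq_mul, mul_one]
    rw [← smul_eq_mul, h3, hmkx, map_zero]
  have hx1 : x * c = x := by rw [hc, mul_sub, mul_one, h2, sub_zero]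
  have hy1 : y ∣ 1 - c := by
    have hmem : (1 - c) ∈ LinearMap.ker (LinearMap.toSpanSingleton A A x) := by
      show (1 - c) • x = 0
      rw [smul_eq_mul, sub_mul, one_mul, mul_comm c x, hx1, sub_self]
    rw [hann] at hmem
    exact Ideal.mem_span_singleton.mp hmem
  obtain ⟨u, hu⟩ := hcx
  obtain ⟨v, hv⟩ := hy1
  have hcc : c * (1 - c) = 0 := by
    rw [hv, hu]
    linear_combination u * v * hxy
  by_cases hcu : IsUnit c
  · obtain ⟨w, hw⟩ := hcu.exists_left_inv
    have h1c : (1 : A) - c = 0 := by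
      calc (1 : A) - c = (w * c) * (1 - c) := by rw [hw, one_mul]
        _ = w * (c * (1 - c)) := by ring
        _ = 0 := by rw [hcc, mul_zero]
    have hc1 : c = 1 := (sub_eq_zero.mp h1c).symm
    have hxu : x * u = 1 := by rw [← hu, hc1]
    refine hy ?_
    calc y = (x * u) * y := by rw [hxu, one_mul]
      _ = (x * y) * u := by ring
      _ = 0 := by rw [hxy, zero_mul]
  · obtain ⟨w, hw⟩ := (unit_of_nonunit hval hcu).exists_left_inv
    have hc0 : c = 0 := by
      calc c = (w * (1 - c)) * c := by rw [hw, one_mul]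
        _ = w * (c * (1 - c)) := by ring
        _ = 0 := by rw [hcc, mul_zero]
    have hyv : y * v = 1 := by rw [← hv, hc0, sub_zero]
    refine hx ?_
    calc x = x * (y * v) := by rw [hyv, mul_one]
      _ = (x * y) * v := by ring
      _ = 0 := by rw [hxy, zero_mul]

end Main

/-- Let `A` be a valuation ring having a nonzero zero-divisor `a` whose annihilator
is a finitely generated ideal.  Then `A/aA` is `2`-presented with infinite projective
dimension; consequently `A` is not a `(2,d)`-ring for any `d`. -/
theorem stmt11 (A : Type u) [CommRing A]
    (hval : ∀ a b : A, a ∣ b ∨ b ∣ a)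
    (a : A) (ha : a ≠ 0) (hzd : ∃ b : A, b ≠ 0 ∧ a * b = 0)
    (hfg : (LinearMap.ker (LinearMap.toSpanSingleton A A a)).FG) :
    IsNPresented A 2 (A ⧸ Ideal.span {a}) ∧
      (¬ ∃ d : ℕ, ProjDimLE A d (A ⧸ Ideal.span {a})) ∧
      ∀ d : ℕ, ¬ ∀ (M : Type u) [AddCommGroup M] [Module A M],
        IsNPresented A 2 M → ProjDimLE A d M := by
  classical
  obtain ⟨b, hann_a⟩ := fg_principal hval hfg
  obtain ⟨b₀, hb₀, hab₀⟩ := hzd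
  have hb₀mem : b₀ ∈ LinearMap.ker (LinearMap.toSpanSingleton A A a) := by
    show b₀ • a = 0
    rw [smul_eq_mul, mul_comm]
    exact hab₀
  rw [hann_a] at hb₀mem
  obtain ⟨u₀, hu₀⟩ := Ideal.mem_span_singleton.mp hb₀mem
  have hb : b ≠ 0 := by
    intro h
    exact hb₀ (by rw [hu₀, h, zero_mul])
  have hab : a * b = 0 := by
    have hbmem : b ∈ Ideal.span ({b} : Set A) := Ideal.mem_span_singleton_self b
    rw [← hann_a] at hbmem
    have : b • a = 0 := hbmem
    rw [smul_eq_mul, mul_comm] at this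
    exact this
  -- annihilator of b is exactly (a)
  have hann_b : LinearMap.ker (LinearMap.toSpanSingleton A A b) = Ideal.span {a} := by
    apply le_antisymm
    · intro c hc
      have hcb : c * b = 0 := by
        have : c • b = 0 := hc
        rwa [smul_eq_mul] at this
      rcases hval a c with h | ⟨d, hd⟩
      · exact Ideal.mem_span_singleton.mpr h
      · by_cases hdu : IsUnit d
        · obtain ⟨w, hw⟩ := hdu.exists_left_inv
          refine Ideal.mem_span_singleton.mpr ⟨w, ?_⟩
          calc c = c * (w * d) := by rw [hw, mul_one]
            _ = (c * d) * w := by ring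
            _ = a * w := by rw [← hd]
        · rcases hval d b with ⟨e, he⟩ | ⟨g, hg⟩
          · -- b = d * e
            have hae : a * e = 0 := by
              have h1 : a * e = c * b := by rw [hd, he]; ring
              rw [h1, hcb]
            have hemem : e ∈ LinearMap.ker (LinearMap.toSpanSingleton A A a) := by
              show e • a = 0
              rw [smul_eq_mul, mul_comm]
              exact hae
            rw [hann_a] at hemem
            obtain ⟨f', hf'⟩ := Ideal.mem_span_singleton.mp hemem
            have hb1 : b * (1 - d * f') = 0 := by
              have h1 : b = d * (b * f') := by rw [← hf', ← he]
              linear_combination h1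
            have hdf : ¬ IsUnit (d * f') := fun h => hdu (isUnit_of_mul_isUnit_left h)
            obtain ⟨w, hw⟩ := (unit_of_nonunit hval hdf).exists_left_inv
            exact absurd (by
              calc b = b * (w * (1 - d * f')) := by rw [hw, mul_one]
                _ = w * (b * (1 - d * f')) := by ring
                _ = 0 := by rw [hb1, mul_zero]) hb
          · -- d = b * g
            exact absurd (by
              calc a = c * d := hd
                _ = (c * b) * g := by rw [hg]; ring
                _ = 0 := by rw [hcb, zero_mul]) ha
    · have hamem : a ∈ LinearMap.ker (LinearMap.toSpanSingleton A A b) := by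
        show a • b = 0
        rw [smul_eq_mul]
        exact hab
      exact Ideal.span_le.mpr (Set.singleton_subset_iff.mpr hamem)
  -- the two quotients have no finite projective dimension
  have hnot : ∀ d : ℕ, ¬ ProjDimLE A d (A ⧸ Ideal.span {a}) ∧
      ¬ ProjDimLE A d (A ⧸ Ideal.span {b}) := by
    intro d
    induction d with
    | zero =>
      exact ⟨pd_base hval a b ha hb hab hann_a,
        pd_base hval b a hb ha (by rw [mul_comm]; exact hab) hann_b⟩
    | succ d ih =>
      exact ⟨fun h => ih.2 (pd_step a b hann_a d h),
        fun h => ih.1 (pd_step b a hann_b d h)⟩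
  -- 2-presentedness
  have hpres : IsNPresented A 2 (A ⧸ Ideal.span {a}) := by
    let Q := (Ideal.span {a} : Submodule A A).mkQ
    let f0 : (Fin 1 → A) →ₗ[A] (A ⧸ Ideal.span {a}) := Q ∘ₗ LinearMap.proj (0 : Fin 1)
    have hf0 : Function.Surjective f0 := by
      intro z
      obtain ⟨r, hr⟩ := Submodule.mkQ_surjective (Ideal.span {a} : Submodule A A) z
      exact ⟨fun _ => r, hr⟩
    refine ⟨1, f0, hf0, ?_⟩
    let g1 : (Fin 1 → A) →ₗ[A] (Fin 1 → A) :=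
      LinearMap.smulRight (LinearMap.proj (0 : Fin 1)) (fun _ => a)
    have hg1mem : ∀ v : Fin 1 → A, g1 v ∈ LinearMap.ker f0 := by
      intro v
      show Q ((g1 v) 0) = 0
      have : (g1 v) 0 = v 0 * a := rfl
      rw [this, ← LinearMap.mem_ker, Submodule.ker_mkQ]
      exact Ideal.mem_span_singleton.mpr (dvd_mul_left a (v 0))
    let f1 : (Fin 1 → A) →ₗ[A] LinearMap.ker f0 :=
      LinearMap.codRestrict _ g1 hg1mem
    have hf1 : Function.Surjective f1 := by
      rintro ⟨w, hw⟩
      have hw0 : w 0 ∈ (Ideal.span {a} : Submodule A A) := by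
        rw [← Submodule.ker_mkQ (Ideal.span {a} : Submodule A A), LinearMap.mem_ker]
        exact hw
      obtain ⟨t, ht⟩ := Ideal.mem_span_singleton.mp hw0
      refine ⟨fun _ => t, Subtype.ext (funext fun i => ?_)⟩
      have hi : i = 0 := Subsingleton.elim i 0
      rw [hi]
      show t * a = w 0
      rw [ht, mul_comm]
    refine ⟨1, f1, hf1, ?_⟩
    show Module.Finite A (LinearMap.ker f1)
    have hker1 : LinearMap.ker f1 = LinearMap.ker g1 := LinearMap.ker_codRestrict _ _ _
    have efin : LinearMap.ker (LinearMap.toSpanSingleton A A a) ≃ₗ[A] LinearMap.ker g1 := by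
      refine LinearEquiv.ofLinear
        (LinearMap.codRestrict _ ((LinearMap.pi fun _ : Fin 1 => LinearMap.id) ∘ₗ
          (LinearMap.ker (LinearMap.toSpanSingleton A A a)).subtype) ?_)
        (LinearMap.codRestrict _ (LinearMap.proj (0 : Fin 1) ∘ₗ
          (LinearMap.ker g1).subtype) ?_) ?_ ?_
      · intro y
        have hy : y.1 * a = 0 := y.2
        show g1 (fun _ => y.1) = 0
        funext i
        show y.1 * a = 0
        exact hy
      · intro v
        have hv : g1 v.1 = 0 := v.2
        show (v.1 0) • a = 0
        rw [smul_eq_mul]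
        exact congrFun hv 0
      · refine LinearMap.ext fun v => Subtype.ext (funext fun i => ?_)
        have hi : i = 0 := Subsingleton.elim i 0
        rw [hi]
        rfl
      · exact LinearMap.ext fun y => Subtype.ext rfl
    have hfin : Module.Finite A (LinearMap.ker (LinearMap.toSpanSingleton A A a)) :=
      Module.Finite.iff_fg.mpr hfg
    rw [hker1]
    exact Module.Finite.equiv efin
  refine ⟨hpres, ?_, ?_⟩
  · rintro ⟨d, hd⟩
    exact (hnot d).1 hd
  · intro d hall
    exact (hnot d).1 (hall _ hpres)
end

section
/- Let A be a valuation ring with nonzero zero-divisor a such that (0:a) = bA is principal, and (0:b) = cA is principal. Then (0:c) = bA. -/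
universe u

/-- Let `A` be a valuation ring with a nonzero zero-divisor `a` such that
`(0 : a) = bA` and `(0 : b) = cA`.  Then `(0 : c) = bA`. -/
theorem stmt12 (A : Type u) [CommRing A]
    (hval : ∀ a b : A, a ∣ b ∨ b ∣ a)
    (a b c : A) (ha : a ≠ 0) (hzd : ∃ t : A, t ≠ 0 ∧ a * t = 0)
    (hb : LinearMap.ker (LinearMap.toSpanSingleton A A a) = Ideal.span {b})
    (hc : LinearMap.ker (LinearMap.toSpanSingleton A A b) = Ideal.span {c}) :
    LinearMap.ker (LinearMap.toSpanSingleton A A c) = Ideal.span {b} := by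
  have hba : b * a = 0 := by
    have : b ∈ LinearMap.ker (LinearMap.toSpanSingleton A A a) := by
      rw [hb]; exact Ideal.mem_span_singleton_self b
    simpa [LinearMap.mem_ker, LinearMap.toSpanSingleton_apply, smul_eq_mul] using this
  have hcb : c * b = 0 := by
    have : c ∈ LinearMap.ker (LinearMap.toSpanSingleton A A b) := by
      rw [hc]; exact Ideal.mem_span_singleton_self c
    simpa [LinearMap.mem_ker, LinearMap.toSpanSingleton_apply, smul_eq_mul] using this
  have hac : a ∈ Ideal.span ({c} : Set A) := by
    rw [← hc]
    simp [LinearMap.mem_ker, LinearMap.toSpanSingleton_apply, smul_eq_mul, mul_comm a b, hba]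
  obtain ⟨d, hd⟩ := Ideal.mem_span_singleton'.mp hac
  ext x
  simp only [LinearMap.mem_ker, LinearMap.toSpanSingleton_apply, smul_eq_mul]
  constructor
  · intro hx
    have : x * a = 0 := by rw [← hd, ← mul_assoc, mul_comm x d, mul_assoc, hx, mul_zero]
    rw [← hb]
    simpa [LinearMap.mem_ker, LinearMap.toSpanSingleton_apply, smul_eq_mul] using this
  · intro hx
    obtain ⟨e, he⟩ := Ideal.mem_span_singleton'.mp hx
    rw [← he, mul_assoc, mul_comm b c, hcb, mul_zero]
end

section
/- Let A be a coherent valuation ring with zero divisors (i.e., A is not a domain). Then A is not a (2,d)-ring for any nonnegative integer d. -/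
universe u

open Function LinearMap Submodule

variable {A : Type u} [CommRing A]

/-- Split surjection onto a projective gives a product decomposition. -/
lemma split_equiv {X P : Type u} [AddCommGroup X] [Module A X] [AddCommGroup P] [Module A P]
    [Module.Projective A P] (π : X →ₗ[A] P) (hπ : Surjective π) :
    Nonempty ((LinearMap.ker π × P) ≃ₗ[A] X) := by
  obtain ⟨s, hs⟩ := Module.projective_lifting_property π LinearMap.id hπ
  have hsx : ∀ p, π (s p) = p := fun p => congrArg (fun f => f p) (congrArg DFunLike.coe hs)
  refine ⟨LinearEquiv.ofLinear ((LinearMap.ker π).subtype.comp (LinearMap.fst A _ P) + s.comp (LinearMap.snd A _ P))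
    (LinearMap.prod (LinearMap.codRestrict (LinearMap.ker π) (LinearMap.id - s.comp π) ?_) π) ?_ ?_⟩
  · intro x; simp [hsx]
  · ext x
    all_goals simp [hsx, LinearMap.map_coe_ker]
  · ext x
    all_goals simp [hsx, LinearMap.map_coe_ker]

section Schanuel
variable {M P Q : Type u} [AddCommGroup M] [Module A M] [AddCommGroup P] [Module A P]
  [AddCommGroup Q] [Module A Q]

/-- Schanuel's lemma (one projective version suffices for both sides by symmetry). -/
lemma schanuel [Module.Projective A P] [Module.Projective A Q]
    (f : P →ₗ[A] M) (g : Q →ₗ[A] M) (hf : Surjective f) (hg : Surjective g) :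
    Nonempty ((LinearMap.ker f × Q) ≃ₗ[A] (LinearMap.ker g × P)) := by
  classical
  set D : P × Q →ₗ[A] M := f.comp (LinearMap.fst A P Q) - g.comp (LinearMap.snd A P Q) with hD
  set X := LinearMap.ker D with hX
  set π₁ : X →ₗ[A] P := (LinearMap.fst A P Q).comp X.subtype with hπ₁
  set π₂ : X →ₗ[A] Q := (LinearMap.snd A P Q).comp X.subtype with hπ₂
  have hmem : ∀ x : X, f (x : P × Q).1 = g (x : P × Q).2 := by
    intro x
    have h : D (x : P × Q) = 0 := x.2
    rw [hD] at h
    simp only [LinearMap.sub_apply, LinearMap.comp_apply, LinearMap.fst_apply,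
      LinearMap.snd_apply, sub_eq_zero] at h
    exact h
  have hπ₁s : Surjective π₁ := by
    intro p
    obtain ⟨q, hq⟩ := hg (f p)
    exact ⟨⟨(p, q), by simp [hX, hD, hq]⟩, rfl⟩
  have hπ₂s : Surjective π₂ := by
    intro q
    obtain ⟨p, hp⟩ := hf (g q)
    exact ⟨⟨(p, q), by simp [hX, hD, hp]⟩, rfl⟩
  -- ker π₁ ≃ ker g
  have k₁ : (LinearMap.ker π₁) ≃ₗ[A] (LinearMap.ker g) := by
    refine LinearEquiv.ofLinear
      (LinearMap.codRestrict _ ((LinearMap.snd A P Q).comp (X.subtype.comp (LinearMap.ker π₁).subtype)) ?_)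
      (LinearMap.codRestrict _ (LinearMap.codRestrict X ((LinearMap.inr A P Q).comp (LinearMap.ker g).subtype) ?_) ?_) ?_ ?_
    · intro x
      have h1 : ((x : X) : P × Q).1 = 0 := x.2
      have := hmem x.1
      rw [h1] at this
      simpa [LinearMap.mem_ker] using this.symm
    · intro q; simp [hX, hD, q.2.out]
    · intro q; rfl
    · ext x; rfl
    · ext x
      · exact (x.2.out : _ = (0:P)).symm
      · rfl
  -- ker π₂ ≃ ker f
  have k₂ : (LinearMap.ker π₂) ≃ₗ[A] (LinearMap.ker f) := by
    refine LinearEquiv.ofLinear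
      (LinearMap.codRestrict _ ((LinearMap.fst A P Q).comp (X.subtype.comp (LinearMap.ker π₂).subtype)) ?_)
      (LinearMap.codRestrict _ (LinearMap.codRestrict X ((LinearMap.inl A P Q).comp (LinearMap.ker f).subtype) ?_) ?_) ?_ ?_
    · intro x
      have h1 : ((x : X) : P × Q).2 = 0 := x.2
      have := hmem x.1
      rw [h1] at this
      simpa [LinearMap.mem_ker] using this
    · intro p; simp [hX, hD, p.2.out]
    · intro p; rfl
    · ext x; rfl
    · ext x
      · rfl
      · exact (x.2.out : _ = (0:Q)).symm
  obtain ⟨e₁⟩ := split_equiv π₁ hπ₁s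
  obtain ⟨e₂⟩ := split_equiv π₂ hπ₂s
  exact ⟨(k₂.symm.prodCongr (LinearEquiv.refl A Q)).trans <| e₂.trans <| e₁.symm.trans <|
    k₁.prodCongr (LinearEquiv.refl A P)⟩

end Schanuel

section PD
variable {M N : Type u} [AddCommGroup M] [Module A M] [AddCommGroup N] [Module A N]

lemma projDimLE_zero_iff : ProjDimLE A 0 M ↔ Module.Projective A M := Iff.rfl

lemma projDimLE_succ_iff {d : ℕ} : ProjDimLE A (d+1) M ↔
    ∃ (ι : Type u) (f : (ι →₀ A) →ₗ[A] M),
      Function.Surjective f ∧ ProjDimLE A d (LinearMap.ker f) := Iff.rfl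

end PD

lemma projective_prod {M N : Type u} [AddCommGroup M] [Module A M] [AddCommGroup N] [Module A N]
    [Module.Projective A M] [Module.Projective A N] : Module.Projective A (M × N) := by
  obtain ⟨sM, hsM⟩ := Module.projective_def.mp (inferInstance : Module.Projective A M)
  obtain ⟨sN, hsN⟩ := Module.projective_def.mp (inferInstance : Module.Projective A N)
  set e := Finsupp.sumFinsuppLEquivProdFinsupp (R := A) (M := A) (α := M) (β := N)
  refine Module.Projective.of_split (M := (M ⊕ N) →₀ A)
    (e.symm.toLinearMap.comp (LinearMap.prodMap sM sN))
    ((LinearMap.prodMap (Finsupp.linearCombination A _root_.id) (Finsupp.linearCombination A _root_.id)).comp e.toLinearMap)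
    (LinearMap.ext fun p => ?_)
  simp only [LinearMap.comp_apply, LinearEquiv.coe_coe, LinearEquiv.apply_symm_apply,
    LinearMap.prodMap_apply, LinearMap.id_apply]
  exact Prod.ext (hsM p.1) (hsN p.2)

lemma pdle_congr : ∀ (d : ℕ) {M N : Type u} [AddCommGroup M] [Module A M] [AddCommGroup N]
    [Module A N], (M ≃ₗ[A] N) → ProjDimLE A d M → ProjDimLE A d N := by
  intro d
  induction d with
  | zero =>
    intro M N _ _ _ _ e h
    haveI : Module.Projective A M := h
    exact (Module.Projective.of_equiv e : Module.Projective A N)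
  | succ d ih =>
    intro M N _ _ _ _ e h
    obtain ⟨ι, f, hf, hk⟩ := h
    refine ⟨ι, e.toLinearMap.comp f, e.surjective.comp hf, ?_⟩
    have hker : LinearMap.ker (e.toLinearMap.comp f) = LinearMap.ker f := by
      rw [LinearMap.ker_comp, LinearEquiv.ker, Submodule.comap_bot]
    rw [hker]
    exact hk

lemma ker_prodMap_id_equiv {F M T : Type u} [AddCommGroup F] [Module A F] [AddCommGroup M]
    [Module A M] [AddCommGroup T] [Module A T] (f : F →ₗ[A] M) :
    Nonempty ((LinearMap.ker (f.prodMap (LinearMap.id : T →ₗ[A] T))) ≃ₗ[A] LinearMap.ker f) := by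
  refine ⟨LinearEquiv.ofLinear
    (LinearMap.codRestrict _ ((LinearMap.fst A F T).comp (LinearMap.ker (f.prodMap (LinearMap.id : T →ₗ[A] T))).subtype) ?_)
    (LinearMap.codRestrict _ ((LinearMap.inl A F T).comp (LinearMap.ker f).subtype) ?_) ?_ ?_⟩
  · intro x
    have hx : (f.prodMap (LinearMap.id : T →ₗ[A] T)) ↑x = 0 := x.2
    exact congrArg Prod.fst hx
  · intro x
    have hx : f ↑x = 0 := x.2
    simp [LinearMap.mem_ker, Prod.ext_iff, hx]
  · ext x
    rfl
  · ext x
    · rfl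
    · have hx : (f.prodMap (LinearMap.id : T →ₗ[A] T)) ↑x = 0 := x.2
      exact (congrArg Prod.snd hx).symm

lemma pdle_prod_free : ∀ (d : ℕ) {M : Type u} [AddCommGroup M] [Module A M] (τ : Type u),
    ProjDimLE A d M → ProjDimLE A d (M × (τ →₀ A)) := by
  intro d
  induction d with
  | zero =>
    intro M _ _ τ h
    haveI : Module.Projective A M := h
    exact (projective_prod : Module.Projective A (M × (τ →₀ A)))
  | succ d ih =>
    intro M _ _ τ h
    obtain ⟨ι, f, hf, hk⟩ := h
    set e := (Finsupp.sumFinsuppLEquivProdFinsupp (R := A) (M := A) (α := ι) (β := τ))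
    set g := f.prodMap (LinearMap.id : (τ →₀ A) →ₗ[A] (τ →₀ A)) with hg
    refine ⟨ι ⊕ τ, g.comp e.toLinearMap, ?_, ?_⟩
    · exact (hf.prodMap surjective_id).comp e.surjective
    · have hker : LinearMap.ker (g.comp e.toLinearMap)
          = Submodule.comap e.toLinearMap (LinearMap.ker g) := LinearMap.ker_comp _ _
      obtain ⟨k⟩ := ker_prodMap_id_equiv (T := τ →₀ A) f
      have hmap : (Submodule.comap e.toLinearMap (LinearMap.ker g)).map (e : _ →ₗ[A] _)
          = LinearMap.ker g := Submodule.map_comap_eq_of_surjective e.surjective _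
      have e' := LinearEquiv.ofSubmodules e _ _ hmap
      rw [hker]
      exact pdle_congr d ((e'.trans k).symm) hk

section Algebra

lemma principal_of_fg (hval : ∀ a b : A, a ∣ b ∨ b ∣ a) (I : Ideal A) (h : I.FG) : ∃ x, I = Ideal.span {x} := by
  refine Submodule.fg_induction (R := A) (M := A) (motive := fun I _ => ∃ x, I = Ideal.span {x}) (fun x => ⟨x, rfl⟩)
    ?_ I h
  rintro I J _ _ ⟨x, rfl⟩ ⟨y, rfl⟩
  rcases hval x y with hxy | hyx
  · exact ⟨x, sup_eq_left.mpr (Ideal.span_singleton_le_span_singleton.mpr hxy)⟩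
  · exact ⟨y, sup_eq_right.mpr (Ideal.span_singleton_le_span_singleton.mpr hyx)⟩

lemma mem_ann {r x : A} : r ∈ LinearMap.ker (LinearMap.toSpanSingleton A A x) ↔ r * x = 0 := by
  simp [LinearMap.mem_ker, LinearMap.toSpanSingleton_apply, smul_eq_mul]

lemma ann_fg (hcoh : ∀ I : Ideal A, I.FG → Module.FinitePresentation A I) (x : A) :
    (LinearMap.ker (LinearMap.toSpanSingleton A A x)).FG := by
  have hsp : (Ideal.span {x} : Ideal A) = LinearMap.range (LinearMap.toSpanSingleton A A x) := by
    rw [← LinearMap.span_singleton_eq_range]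
  haveI : Module.FinitePresentation A (LinearMap.range (LinearMap.toSpanSingleton A A x)) :=
    hsp ▸ hcoh (Ideal.span {x}) (Submodule.fg_span_singleton x)
  have := Module.FinitePresentation.fg_ker (R := A)
    (LinearMap.toSpanSingleton A A x).rangeRestrict
    (LinearMap.surjective_rangeRestrict _)
  rwa [LinearMap.ker_rangeRestrict] at this

end Algebra

lemma exists_next (hval : ∀ a b : A, a ∣ b ∨ b ∣ a)
    (hcoh : ∀ I : Ideal A, I.FG → Module.FinitePresentation A I)
    {x : A} (hx : x ≠ 0) (hann : ∃ z, z ≠ 0 ∧ x * z = 0) :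
    ∃ y, (y ≠ 0 ∧ ∃ z, z ≠ 0 ∧ y * z = 0) ∧
      LinearMap.ker (LinearMap.toSpanSingleton A A x) = Ideal.span {y} := by
  obtain ⟨z, hz0, hxz⟩ := hann
  obtain ⟨y, hy⟩ := principal_of_fg hval _ (ann_fg hcoh x)
  have hzmem : z ∈ Ideal.span {y} := hy ▸ mem_ann.mpr (by rwa [mul_comm])
  have hy0 : y ≠ 0 := by
    rintro rfl
    rw [Ideal.span_singleton_eq_bot.mpr rfl] at hzmem
    exact hz0 (by simpa using hzmem)
  have hymem : y ∈ Ideal.span {y} := Ideal.mem_span_singleton_self y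
  have hyx : y * x = 0 := mem_ann.mp (hy ▸ hymem)
  exact ⟨y, ⟨hy0, ⟨x, hx, hyx⟩⟩, hy⟩

lemma localRing (hval : ∀ a b : A, a ∣ b ∨ b ∣ a) [Nontrivial A] : IsLocalRing A := by
  refine IsLocalRing.of_nonunits_add ?_
  intro a b ha hb hab
  rcases hval a b with ⟨c, rfl⟩ | ⟨c, rfl⟩
  · exact ha (isUnit_of_mul_isUnit_left (by rwa [← mul_one_add] at hab))
  · exact hb (isUnit_of_mul_isUnit_left (by rwa [add_comm, ← mul_one_add] at hab))

lemma not_projective (hval : ∀ a b : A, a ∣ b ∨ b ∣ a)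
    {x y : A} (hx : x ≠ 0) (hy : y ≠ 0) (hxy : x * y = 0) :
    ¬ Module.Projective A (A ⧸ Ideal.span ({x} : Set A)) := by
  intro hP
  haveI : Nontrivial A := nontrivial_of_ne x 0 hx
  haveI : IsLocalRing A := localRing hval
  obtain ⟨s, hs⟩ := Module.projective_lifting_property (Ideal.span ({x} : Set A)).mkQ
    LinearMap.id (Submodule.mkQ_surjective _)
  have hsap : ∀ q, (Ideal.span ({x} : Set A)).mkQ (s q) = q := fun q =>
    congrArg (fun f => f q) (congrArg DFunLike.coe hs)
  set e := s ((Ideal.span ({x} : Set A)).mkQ 1) with he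
  have h1 : (1 : A) - e ∈ Ideal.span ({x} : Set A) := by
    rw [← Submodule.Quotient.eq]
    exact (hsap _).symm
  obtain ⟨r, hr⟩ := Ideal.mem_span_singleton'.mp h1
  have h3 : x * e = 0 := by
    have h4 : x • e = s (x • (Ideal.span ({x} : Set A)).mkQ 1) := (map_smul s x _).symm
    have h5 : x • (Ideal.span ({x} : Set A)).mkQ 1 = (Ideal.span ({x} : Set A)).mkQ x := by
      rw [← map_smul, smul_eq_mul, mul_one]
    rw [h5] at h4
    have hx0 : (Ideal.span ({x} : Set A)).mkQ x = 0 := (Submodule.Quotient.mk_eq_zero _).mpr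
      (Ideal.mem_span_singleton_self x)
    rw [hx0, map_zero] at h4
    simpa [smul_eq_mul] using h4
  have hxnu : ¬ IsUnit x := fun hu => hy ((hu.mul_right_eq_zero).mp hxy)
  have hru : IsUnit (1 - r * x) := by
    refine IsLocalRing.isUnit_one_sub_self_of_mem_nonunits _ (fun hu => hxnu ?_)
    exact isUnit_of_mul_isUnit_right hu
  have hre : e = 1 - r * x := by rw [hr]; ring
  have : x * (1 - r * x) = 0 := by rw [← hre]; exact h3
  rw [mul_comm] at this
  exact hx ((hru.mul_right_eq_zero).mp this)

/-- The kernel of the standard presentation of `(A ⧸ (x)) × free`. -/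
lemma ker_presentation_equiv {σ : Type u} {x y : A}
    (hann : LinearMap.ker (LinearMap.toSpanSingleton A A x) = Ideal.span {y}) :
    Nonempty ((LinearMap.ker (((Ideal.span ({x} : Set A)).mkQ).prodMap
      (LinearMap.id : (σ →₀ A) →ₗ[A] (σ →₀ A)))) ≃ₗ[A] (A ⧸ Ideal.span ({y} : Set A))) := by
  obtain ⟨k1⟩ := ker_prodMap_id_equiv (T := σ →₀ A) (Ideal.span ({x} : Set A)).mkQ
  have k2 : (LinearMap.ker (Ideal.span ({x} : Set A)).mkQ) ≃ₗ[A] (Ideal.span ({x} : Set A)) :=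
    LinearEquiv.ofEq _ _ (Submodule.ker_mkQ _)
  have k3 : (Ideal.span ({x} : Set A) : Submodule A A)
      ≃ₗ[A] (LinearMap.range (LinearMap.toSpanSingleton A A x)) :=
    LinearEquiv.ofEq _ _ (by rw [← LinearMap.span_singleton_eq_range])
  have k4 := (LinearMap.toSpanSingleton A A x).quotKerEquivRange
  have k5 : (A ⧸ LinearMap.ker (LinearMap.toSpanSingleton A A x))
      ≃ₗ[A] (A ⧸ Ideal.span ({y} : Set A)) := Submodule.quotEquivOfEq _ _ hann
  exact ⟨k1.trans <| k2.trans <| k3.trans <| k4.symm.trans k5⟩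

lemma key_induction (hval : ∀ a b : A, a ∣ b ∨ b ∣ a) (c : ℕ → A) (hc0 : ∀ n, c n ≠ 0)
    (hck : ∀ n, LinearMap.ker (LinearMap.toSpanSingleton A A (c n)) = Ideal.span {c (n+1)}) :
    ∀ (d : ℕ) (n : ℕ) (σ : Type u),
      ¬ ProjDimLE A d ((A ⧸ Ideal.span ({c n} : Set A)) × (σ →₀ A)) := by
  have hmul : ∀ n, c n * c (n+1) = 0 := by
    intro n
    have : c (n+1) ∈ Ideal.span {c (n+1)} := Ideal.mem_span_singleton_self _
    rw [← hck n] at this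
    rw [mul_comm]
    exact mem_ann.mp this
  intro d
  induction d with
  | zero =>
    intro n σ h
    haveI : Module.Projective A ((A ⧸ Ideal.span ({c n} : Set A)) × (σ →₀ A)) := h
    have hproj : Module.Projective A (A ⧸ Ideal.span ({c n} : Set A)) :=
      Module.Projective.of_split (LinearMap.inl A _ (σ →₀ A)) (LinearMap.fst A _ (σ →₀ A))
        (by ext; rfl)
    exact not_projective hval (hc0 n) (hc0 (n+1)) (hmul n) hproj
  | succ d ih =>
    intro n σ h
    obtain ⟨ι, f, hf, hk⟩ := h
    set g := ((Ideal.span ({c n} : Set A)).mkQ).prodMap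
      (LinearMap.id : (σ →₀ A) →ₗ[A] (σ →₀ A)) with hg
    haveI : Module.Projective A (A × (σ →₀ A)) := projective_prod
    have hgs : Surjective g := (Submodule.mkQ_surjective _).prodMap surjective_id
    obtain ⟨es⟩ := schanuel f g hf hgs
    obtain ⟨ek⟩ := ker_presentation_equiv (σ := σ) (hck n)
    -- A × (σ →₀ A) ≃ (PUnit ⊕ σ) →₀ A
    have u1 : (A × (σ →₀ A)) ≃ₗ[A] ((PUnit.{u+1} ⊕ σ) →₀ A) := by
      refine LinearEquiv.trans (LinearEquiv.prodCongr
        (Finsupp.LinearEquiv.finsuppUnique A A PUnit.{u+1}).symm (LinearEquiv.refl A (σ →₀ A)))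
        (Finsupp.sumFinsuppLEquivProdFinsupp A).symm
    have h1 : ProjDimLE A d ((LinearMap.ker f) × ((PUnit.{u+1} ⊕ σ) →₀ A)) :=
      pdle_prod_free d _ hk
    have h2 : ProjDimLE A d ((A ⧸ Ideal.span ({c (n+1)} : Set A)) × (ι →₀ A)) := by
      refine pdle_congr d ?_ h1
      exact ((LinearEquiv.refl A (LinearMap.ker f)).prodCongr u1.symm).trans <|
        es.trans (ek.prodCongr (LinearEquiv.refl A (ι →₀ A)))
    exact ih (n+1) ι h2

lemma isNPresented_succ_iff {n : ℕ} {M : Type u} [AddCommGroup M] [Module A M] :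
    IsNPresented A (n+1) M ↔ ∃ (k : ℕ) (f : (Fin k → A) →ₗ[A] M),
      Function.Surjective f ∧ IsNPresented A n (LinearMap.ker f) := Iff.rfl

lemma isNPresented_zero_iff {M : Type u} [AddCommGroup M] [Module A M] :
    IsNPresented A 0 M ↔ Module.Finite A M := Iff.rfl

lemma isNPresented_cyclic (x y : A)
    (hann : LinearMap.ker (LinearMap.toSpanSingleton A A x) = Ideal.span {y}) :
    IsNPresented A 2 (A ⧸ Ideal.span ({x} : Set A)) := by
  classical
  set e := (LinearEquiv.funUnique (Fin 1) A A) with he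
  set φ : (Fin 1 → A) →ₗ[A] A := e.toLinearMap with hφ
  set f : (Fin 1 → A) →ₗ[A] (A ⧸ Ideal.span ({x} : Set A)) :=
    ((Ideal.span ({x} : Set A)).mkQ).comp φ with hf
  have hfs : Surjective f := (Submodule.mkQ_surjective _).comp e.surjective
  rw [isNPresented_succ_iff]
  refine ⟨1, f, hfs, ?_⟩
  rw [isNPresented_succ_iff]
  -- the syzygy map
  have hmem : ∀ v : Fin 1 → A, (x • v) ∈ LinearMap.ker f := by
    intro v
    have : φ (x • v) = x * v 0 := by
      simp [hφ, he, smul_eq_mul]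
    rw [LinearMap.mem_ker, hf, LinearMap.comp_apply, this]
    exact (Submodule.Quotient.mk_eq_zero _).mpr (Ideal.mem_span_singleton.mpr ⟨v 0, rfl⟩)
  set ψ : (Fin 1 → A) →ₗ[A] (Fin 1 → A) := x • LinearMap.id with hψ
  set g : (Fin 1 → A) →ₗ[A] (LinearMap.ker f) :=
    LinearMap.codRestrict _ ψ (fun v => hmem v) with hg
  have hgs : Surjective g := by
    rintro ⟨w, hw⟩
    have hw0 : φ w ∈ Ideal.span ({x} : Set A) := by
      have hw' : (Ideal.span ({x} : Set A)).mkQ (φ w) = 0 := hw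
      rwa [Submodule.mkQ_apply, Submodule.Quotient.mk_eq_zero] at hw'
    obtain ⟨r, hr⟩ := Ideal.mem_span_singleton'.mp hw0
    refine ⟨fun _ => r, ?_⟩
    apply Subtype.ext
    funext i
    have : w i = w 0 := congrArg w (Subsingleton.elim i 0)
    have hφw : φ w = w 0 := rfl
    simp only [hg, LinearMap.codRestrict_apply, hψ]
    rw [this]
    rw [hφw] at hr
    simpa [smul_eq_mul, mul_comm] using hr
  refine ⟨1, g, hgs, ?_⟩
  rw [isNPresented_zero_iff]
  have hkg : LinearMap.ker g = Submodule.span A {(fun _ => y : Fin 1 → A)} := by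
    have hyx : y * x = 0 := mem_ann.mp (hann ▸ Ideal.mem_span_singleton_self y)
    apply le_antisymm
    · intro v hv
      have hv' : ψ v = 0 := by
        have := hv
        rw [LinearMap.mem_ker, hg] at this
        exact congrArg Subtype.val this
      have hv0 : x * v 0 = 0 := by
        have := congrFun hv' 0
        simpa [hψ, smul_eq_mul] using this
      have : v 0 ∈ Ideal.span {y} := by
        rw [← hann, mem_ann, mul_comm]; exact hv0
      obtain ⟨r, hr⟩ := Ideal.mem_span_singleton'.mp this
      have hveq : v = r • (fun _ => y : Fin 1 → A) := by
        funext i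
        have : v i = v 0 := congrArg v (Subsingleton.elim i 0)
        rw [this, ← hr]
        simp [smul_eq_mul]
      rw [hveq]
      exact Submodule.smul_mem _ r (Submodule.mem_span_singleton_self _)
    · rw [Submodule.span_le, Set.singleton_subset_iff]
      have : g (fun _ => y : Fin 1 → A) = 0 := by
        apply Subtype.ext
        have : ψ (fun _ => y : Fin 1 → A) = 0 := by
          funext i
          simp [hψ, smul_eq_mul, mul_comm x y, hyx]
        simpa [hg] using this
      exact LinearMap.mem_ker.mpr this
  rw [hkg]
  exact Module.Finite.iff_fg.mpr (Submodule.fg_span_singleton _)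

lemma prod_empty_equiv {M : Type u} [AddCommGroup M] [Module A M] :
    Nonempty (M ≃ₗ[A] (M × (PEmpty.{u+1} →₀ A))) := by
  refine ⟨LinearEquiv.ofLinear (LinearMap.inl A M _) (LinearMap.fst A M _) ?_ ?_⟩
  · ext p
    all_goals first | rfl | exact p.elim
  · ext m
    rfl

/-- A coherent valuation ring with zero divisors is not a `(2,d)`-ring for any `d`. -/
theorem stmt15 (A : Type u) [CommRing A]
    (hval : ∀ a b : A, a ∣ b ∨ b ∣ a)
    (hzd : ∃ a b : A, a ≠ 0 ∧ b ≠ 0 ∧ a * b = 0)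
    (hcoh : ∀ I : Ideal A, I.FG → Module.FinitePresentation A I) :
    ∀ d : ℕ, ¬ ∀ (M : Type u) [AddCommGroup M] [Module A M],
      IsNPresented A 2 M → ProjDimLE A d M := by
  intro d H
  obtain ⟨a, b, ha, hb, hab⟩ := hzd
  have step : ∀ x, (x ≠ 0 ∧ ∃ z, z ≠ 0 ∧ x * z = 0) →
      ∃ y, (y ≠ 0 ∧ ∃ z, z ≠ 0 ∧ y * z = 0) ∧
        LinearMap.ker (LinearMap.toSpanSingleton A A x) = Ideal.span {y} :=
    fun x hx => exists_next hval hcoh hx.1 hx.2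
  choose nxt hgood hker using step
  let seq : ℕ → {x : A // x ≠ 0 ∧ ∃ z, z ≠ 0 ∧ x * z = 0} := fun n =>
    Nat.rec ⟨a, ha, b, hb, hab⟩ (fun _ p => ⟨nxt p.1 p.2, hgood p.1 p.2⟩) n
  set c : ℕ → A := fun n => (seq n).1 with hc
  have hc0 : ∀ n, c n ≠ 0 := fun n => (seq n).2.1
  have hck : ∀ n, LinearMap.ker (LinearMap.toSpanSingleton A A (c n)) = Ideal.span {c (n+1)} :=
    fun n => hker (seq n).1 (seq n).2
  have h2p : IsNPresented A 2 (A ⧸ Ideal.span ({c 0} : Set A)) :=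
    isNPresented_cyclic (c 0) (c 1) (hck 0)
  have hpd := H _ h2p
  obtain ⟨epe⟩ := prod_empty_equiv (A := A) (M := A ⧸ Ideal.span ({c 0} : Set A))
  exact key_induction hval c hc0 hck d 0 PEmpty.{u+1} (pdle_congr d epe hpd)
end

section
/- Let p be a prime and n ≥ 2 a positive integer. Then ℤ/p^nℤ is a valuation ring which is not a (2,d)-ring for any nonnegative integer d; in particular the module (ℤ/p^nℤ)/(p^{n-1}) has infinite projective dimension over ℤ/p^nℤ. -/
universe u

-- scalar case: in ZMod (p^n), if p^a * x = 0 then p^(n-a) ∣ x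
lemma ringQ (p n a : ℕ) (hp : p.Prime) (han : a ≤ n) (x : ZMod (p^n))
    (hx : (p : ZMod (p^n))^a * x = 0) :
    ∃ y : ZMod (p^n), x = (p : ZMod (p^n))^(n-a) * y := by
  haveI : NeZero (p^n) := ⟨pow_ne_zero _ hp.ne_zero⟩
  have h1 : ((p^a * x.val : ℕ) : ZMod (p^n)) = 0 := by
    push_cast [ZMod.natCast_val, ZMod.cast_id]
    exact hx
  have h2 : p^n ∣ p^a * x.val := (ZMod.natCast_eq_zero_iff _ _).mp h1
  have h3 : p^a * p^(n-a) ∣ p^a * x.val := by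
    rwa [← pow_add, Nat.add_sub_cancel' han]
  have h4 : p^(n-a) ∣ x.val :=
    (Nat.mul_dvd_mul_iff_left (pow_pos hp.pos a)).mp h3
  obtain ⟨c, hc⟩ := h4
  refine ⟨(c : ZMod (p^n)), ?_⟩
  have := congrArg (fun t : ℕ => (t : ZMod (p^n))) hc
  simpa [ZMod.natCast_val, ZMod.cast_id] using this

-- free module case
lemma freeQ (p n a : ℕ) (hp : p.Prime) (han : a ≤ n) (ι : Type) (x : ι →₀ ZMod (p^n))
    (hx : (p : ZMod (p^n))^a • x = 0) :
    ∃ y : ι →₀ ZMod (p^n), x = (p : ZMod (p^n))^(n-a) • y := by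
  classical
  set c : ZMod (p^n) := (p : ZMod (p^n))^(n-a) with hc
  set g : ZMod (p^n) → ZMod (p^n) := fun t =>
    if t = 0 then 0 else (if h : ∃ z, t = c * z then h.choose else 0) with hg
  refine ⟨x.mapRange g (by simp [hg]), ?_⟩
  ext i
  rw [Finsupp.smul_apply, Finsupp.mapRange_apply]
  by_cases hxi : x i = 0
  · simp [hxi, hg]
  · have hsm : (p : ZMod (p^n))^a * x i = 0 := by
      have := congrArg (fun f : ι →₀ ZMod (p^n) => f i) hx
      simpa using this
    have hex : ∃ z, x i = c * z := ringQ p n a hp han (x i) hsm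
    rw [hg]
    simp only [hxi, if_false, dif_pos hex, smul_eq_mul]
    exact hex.choose_spec

-- main invariant lemma
lemma keyQ (p n : ℕ) (hp : p.Prime) (hn : 2 ≤ n) :
    ∀ (d a : ℕ), 0 < a → a < n → ∀ (M : Type) [AddCommGroup M] [Module (ZMod (p^n)) M],
    ProjDimLE (ZMod (p^n)) d M → ∀ x : M, (p : ZMod (p^n))^a • x = 0 →
    ∃ y : M, x = (p : ZMod (p^n))^(n-a) • y := by
  intro d
  induction d with
  | zero =>
    intro a ha han M _ _ h x hx
    have hproj : Module.Projective (ZMod (p^n)) M := h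
    obtain ⟨s, hs⟩ := Module.projective_def.mp hproj
    have hsx : (p : ZMod (p^n))^a • s x = 0 := by
      rw [← map_smul, hx, map_zero]
    obtain ⟨w, hw⟩ := freeQ p n a hp han.le M (s x) hsx
    refine ⟨Finsupp.linearCombination (ZMod (p^n)) id w, ?_⟩
    have := hs x
    rw [hw, map_smul] at this
    exact this.symm
  | succ d ih =>
    intro a ha han M _ _ h x hx
    obtain ⟨ι, f, hf, hker⟩ := h
    obtain ⟨u, hu⟩ := hf x
    have hmem : (p : ZMod (p^n))^a • u ∈ LinearMap.ker f := by
      rw [LinearMap.mem_ker, map_smul, hu, hx]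
    have hzero : (p : ZMod (p^n))^(n-a) • (⟨(p : ZMod (p^n))^a • u, hmem⟩ :
        LinearMap.ker f) = 0 := by
      apply Subtype.ext
      show (p : ZMod (p^n))^(n-a) • ((p : ZMod (p^n))^a • u) = (0 : ι →₀ ZMod (p^n))
      rw [smul_smul, ← pow_add, Nat.sub_add_cancel han.le]
      have : ((p : ZMod (p^n)))^n = 0 := by
        have : ((p^n : ℕ) : ZMod (p^n)) = 0 := ZMod.natCast_self _
        push_cast at this
        exact this
      rw [this, zero_smul]
    obtain ⟨k, hk⟩ := ih (n - a) (by omega) (by omega) (LinearMap.ker f) hker _ hzero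
    have hkk : (p : ZMod (p^n))^a • u = (p : ZMod (p^n))^a • (k : ι →₀ ZMod (p^n)) := by
      have := congrArg (fun t : LinearMap.ker f => (t : ι →₀ ZMod (p^n))) hk
      simpa [Nat.sub_sub_self han.le] using this
    have hdiff : (p : ZMod (p^n))^a • (u - (k : ι →₀ ZMod (p^n))) = 0 := by
      rw [smul_sub, hkk, sub_self]
    obtain ⟨w, hw⟩ := freeQ p n a hp han.le ι _ hdiff
    refine ⟨f w, ?_⟩
    have hfk : f (k : ι →₀ ZMod (p^n)) = 0 := k.2
    calc x = f u := hu.symm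
    _ = f (u - (k : ι →₀ ZMod (p^n))) + f (k : ι →₀ ZMod (p^n)) := by
        rw [map_sub, sub_add_cancel]
    _ = (p : ZMod (p^n))^(n-a) • f w := by rw [hw, map_smul, hfk, add_zero]

lemma notPD (p n : ℕ) (hp : p.Prime) (hn : 2 ≤ n) (d : ℕ) :
    ¬ ProjDimLE (ZMod (p^n)) d
      (ZMod (p^n) ⧸ Ideal.span {((p : ZMod (p^n)) ^ (n - 1))}) := by
  intro h
  set R := ZMod (p^n)
  set π : R := (p : R) ^ (n - 1) with hπ
  set I : Ideal R := Ideal.span {π} with hI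
  have hsmul : ∀ r x : R, r • Ideal.Quotient.mk I x = Ideal.Quotient.mk I (r * x) := by
    intro r x
    rfl
  have h1 : (p : R)^(n-1) • (Ideal.Quotient.mk I 1) = 0 := by
    rw [hsmul, mul_one, Ideal.Quotient.eq_zero_iff_mem]
    exact Ideal.mem_span_singleton_self π
  obtain ⟨y, hy⟩ := keyQ p n hp hn d (n-1) (by omega) (by omega) _ h _ h1
  obtain ⟨c, rfl⟩ := Ideal.Quotient.mk_surjective y
  rw [show n - (n - 1) = 1 by omega, pow_one, hsmul,
    Ideal.Quotient.eq, ← Ideal.neg_mem_iff, neg_sub] at hy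
  obtain ⟨t, ht⟩ := Ideal.mem_span_singleton'.mp hy
  have hunit : IsUnit (p : R) := by
    refine IsUnit.of_mul_eq_one (a := (p : R)) (c - (p : R)^(n-2) * t) ?_
    have hpow : π = (p : R) * (p : R)^(n-2) := by
      rw [hπ, ← pow_succ']
      congr 1
      omega
    linear_combination -ht + t * hpow
  haveI : NeZero (p^n) := ⟨pow_ne_zero _ hp.ne_zero⟩
  have hcop := (ZMod.isUnit_iff_coprime p (p^n)).mp hunit
  have hdvd : p ∣ Nat.gcd p (p^n) := Nat.dvd_gcd dvd_rfl (dvd_pow_self p (by omega))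
  rw [Nat.Coprime] at hcop
  rw [hcop] at hdvd
  exact hp.ne_one (Nat.dvd_one.mp hdvd)

lemma presented (p n : ℕ) (hp : p.Prime) (hn : 2 ≤ n) :
    IsNPresented (ZMod (p^n)) 2
      (ZMod (p^n) ⧸ Ideal.span {((p : ZMod (p^n)) ^ (n - 1))}) := by
  haveI : NeZero (p^n) := ⟨pow_ne_zero _ hp.ne_zero⟩
  set R := ZMod (p^n)
  set π : R := (p : R) ^ (n - 1) with hπ
  set I : Ideal R := Ideal.span {π} with hI
  haveI : Finite R := Finite.of_fintype _
  -- first surjection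
  refine ⟨1, (Submodule.mkQ I).comp (LinearMap.proj 0), ?_, ?_⟩
  · exact (Submodule.mkQ_surjective I).comp (fun r => ⟨fun _ => r, rfl⟩)
  · -- second surjection onto the kernel
    set f : (Fin 1 → R) →ₗ[R] (R ⧸ I) := (Submodule.mkQ I).comp (LinearMap.proj 0) with hf
    have hmem : ∀ h : Fin 1 → R, π • h ∈ LinearMap.ker f := by
      intro h
      rw [LinearMap.mem_ker]
      show Submodule.mkQ I (π * h 0) = 0
      rw [Submodule.mkQ_apply, Submodule.Quotient.mk_eq_zero]
      exact I.mul_mem_right (h 0) (Ideal.mem_span_singleton_self π)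
    refine ⟨1, LinearMap.codRestrict (LinearMap.ker f)
      (π • (LinearMap.id : (Fin 1 → R) →ₗ[R] (Fin 1 → R))) (fun h => hmem h), ?_, ?_⟩
    · rintro ⟨g, hg⟩
      rw [LinearMap.mem_ker] at hg
      have hg0 : g 0 ∈ I := by
        rw [← Submodule.Quotient.mk_eq_zero]
        exact hg
      obtain ⟨c, hc⟩ := Ideal.mem_span_singleton'.mp hg0
      refine ⟨fun _ => c, ?_⟩
      apply Subtype.ext
      funext i
      have hi : i = 0 := Subsingleton.elim i 0
      subst hi
      show π • c = g 0
      rw [smul_eq_mul, mul_comm]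
      exact hc
    · exact Module.Finite.of_finite ..

lemma factorZMod (p n : ℕ) (hp : p.Prime) (hn : 0 < n) (x : ZMod (p^n)) (hx : x ≠ 0) :
    ∃ (v : ℕ) (u : ZMod (p^n)), IsUnit u ∧ x = (p : ZMod (p^n))^v * u := by
  haveI : NeZero (p^n) := ⟨pow_ne_zero _ hp.ne_zero⟩
  have hval : x.val ≠ 0 := fun h => hx ((ZMod.val_eq_zero x).mp h)
  set v := x.val.factorization p with hv
  set m := x.val / p^v with hm
  have hsplit : p ^ v * m = x.val := Nat.ordProj_mul_ordCompl_eq_self x.val p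
  have hnd : ¬ p ∣ m := Nat.not_dvd_ordCompl hp hval
  refine ⟨v, (m : ZMod (p^n)), ?_, ?_⟩
  · rw [ZMod.isUnit_iff_coprime]
    exact Nat.Coprime.pow_right n ((hp.coprime_iff_not_dvd.mpr hnd).symm)
  · have := congrArg (fun t : ℕ => (t : ZMod (p^n))) hsplit
    push_cast at this
    rw [this, ZMod.natCast_val, ZMod.cast_id]

lemma valdvd (p n : ℕ) (hp : p.Prime) (hn : 0 < n) :
    ∀ a b : ZMod (p ^ n), a ∣ b ∨ b ∣ a := by
  have tot : ∀ a b : ZMod (p ^ n), a ≠ 0 → b ≠ 0 → a ∣ b ∨ b ∣ a := by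
    intro a b ha hb
    obtain ⟨va, ua, hua, rfl⟩ := factorZMod p n hp hn a ha
    obtain ⟨vb, ub, hub, rfl⟩ := factorZMod p n hp hn b hb
    rcases le_total va vb with hle | hle
    · left
      rw [IsUnit.mul_right_dvd hua]
      exact dvd_mul_of_dvd_left (pow_dvd_pow _ hle) ub
    · right
      rw [IsUnit.mul_right_dvd hub]
      exact dvd_mul_of_dvd_left (pow_dvd_pow _ hle) ua
  intro a b
  by_cases ha : a = 0
  · right; rw [ha]; exact dvd_zero b
  by_cases hb : b = 0
  · left; rw [hb]; exact dvd_zero a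
  exact tot a b ha hb

/-- For a prime `p` and `n ≥ 2`, `ℤ/p^nℤ` is a valuation ring which is not a
`(2,d)`-ring for any `d`; in particular `(ℤ/p^nℤ)/(p^(n-1))` has infinite projective
dimension. -/
theorem stmt16 (p n : ℕ) (hp : p.Prime) (hn : 2 ≤ n) :
    (∀ a b : ZMod (p ^ n), a ∣ b ∨ b ∣ a) ∧
      (¬ ∃ d : ℕ, ProjDimLE (ZMod (p ^ n)) d
        (ZMod (p ^ n) ⧸ Ideal.span {((p : ZMod (p ^ n)) ^ (n - 1))})) ∧
      ∀ d : ℕ, ¬ ∀ (M : Type) [AddCommGroup M] [Module (ZMod (p ^ n)) M],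
        IsNPresented (ZMod (p ^ n)) 2 M → ProjDimLE (ZMod (p ^ n)) d M := by
  refine ⟨valdvd p n hp (by omega), ?_, ?_⟩
  · rintro ⟨d, hd⟩
    exact notPD p n hp hn d hd
  · intro d h
    exact notPD p n hp hn d (h _ (presented p n hp hn))
end

section
/- Let K be a field and n ≥ 2 an integer, and let A = K[x]/(x^n). Then A is a valuation ring, the annihilator of x^{n-1} in A is the principal ideal generated by x, and A is not a (2,d)-ring for any nonnegative integer d. -/
universe u
open Polynomial

set_option synthInstance.maxHeartbeats 1000000
set_option maxHeartbeats 1000000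

namespace Stmt17Aux

variable {K : Type u} [Field K] {n : ℕ}

abbrev Aq (K : Type u) [Field K] (n : ℕ) : Type u := K[X] ⧸ Ideal.span {(X : K[X]) ^ n}

noncomputable abbrev xq (K : Type u) [Field K] (n : ℕ) : Aq K n :=
  Ideal.Quotient.mk (Ideal.span {(X : K[X]) ^ n}) X

lemma mk_pow_eq_zero_iff {j : ℕ} : (xq K n) ^ j = 0 ↔ n ≤ j := by
  rw [← map_pow, Ideal.Quotient.eq_zero_iff_mem, Ideal.mem_span_singleton]
  constructor
  · intro h
    have := Polynomial.natDegree_le_of_dvd h (pow_ne_zero _ Polynomial.X_ne_zero)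
    simpa using this
  · intro h
    exact pow_dvd_pow _ h

lemma xpow_ne_zero {j : ℕ} (h : j < n) : (xq K n) ^ j ≠ 0 := by
  intro hz; exact absurd (mk_pow_eq_zero_iff.mp hz) (by omega)

lemma xpow_n_eq_zero : (xq K n) ^ n = 0 := mk_pow_eq_zero_iff.mpr le_rfl

lemma div_of_pow_mul_eq_zero {j : ℕ} (hj : j ≤ n) (a : Aq K n)
    (h : (xq K n) ^ j * a = 0) : ∃ b, a = (xq K n) ^ (n - j) * b := by
  obtain ⟨p, rfl⟩ := Ideal.Quotient.mk_surjective a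
  rw [← map_pow, ← map_mul, Ideal.Quotient.eq_zero_iff_mem, Ideal.mem_span_singleton] at h
  obtain ⟨q, hq⟩ := h
  refine ⟨Ideal.Quotient.mk _ q, ?_⟩
  rw [← map_pow, ← map_mul]
  congr 1
  have hx : (X : K[X]) ^ j ≠ 0 := pow_ne_zero _ Polynomial.X_ne_zero
  apply mul_left_cancel₀ hx
  rw [hq, ← mul_assoc, ← pow_add]
  congr 2
  omega


lemma eq_zero_or_unit_mul (a : Aq K n) :
    a = 0 ∨ ∃ i < n, ∃ u : Aq K n, IsUnit u ∧ a = (xq K n) ^ i * u := by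
  by_cases ha : a = 0
  · exact Or.inl ha
  right
  obtain ⟨p, rfl⟩ := Ideal.Quotient.mk_surjective a
  have hp : p ≠ 0 := by rintro rfl; simp at ha
  have hfin : FiniteMultiplicity (X - C 0) p := finiteMultiplicity_X_sub_C 0 hp
  rw [map_zero, sub_zero] at hfin
  obtain ⟨q, hq, hndvd⟩ := hfin.exists_eq_pow_mul_and_not_dvd
  set i := multiplicity X p with hidef
  have hunit : IsUnit (Ideal.Quotient.mk (Ideal.span {(X : K[X]) ^ n}) q) := by
    have hcop : IsCoprime ((X : K[X]) ^ n) q :=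
      ((Polynomial.prime_X.coprime_iff_not_dvd).mpr hndvd).pow_left
    obtain ⟨u', v', huv⟩ := hcop
    have h1 : Ideal.Quotient.mk (Ideal.span {(X : K[X]) ^ n}) v' *
        Ideal.Quotient.mk (Ideal.span {(X : K[X]) ^ n}) q = 1 := by
      have h2 := congrArg (Ideal.Quotient.mk (Ideal.span {(X : K[X]) ^ n})) huv
      rw [map_add, map_one, map_mul, map_mul, map_pow] at h2
      rw [← h2, xpow_n_eq_zero, mul_zero, zero_add]
    exact IsUnit.of_mul_eq_one _ (by rw [mul_comm]; exact h1)
  have hmk : Ideal.Quotient.mk (Ideal.span {(X : K[X]) ^ n}) p =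
      (xq K n) ^ i * Ideal.Quotient.mk (Ideal.span {(X : K[X]) ^ n}) q := by
    rw [hq, map_mul, map_pow]
  have hilt : i < n := by
    by_contra hge
    push_neg at hge
    apply ha
    rw [hmk]
    have : (xq K n) ^ i = 0 := mk_pow_eq_zero_iff.mpr hge
    rw [this, zero_mul]
  exact ⟨i, hilt, _, hunit, hmk⟩

lemma dvd_total (a b : Aq K n) : a ∣ b ∨ b ∣ a := by
  rcases eq_zero_or_unit_mul a with rfl | ⟨i, hi, u, hu, rfl⟩
  · exact Or.inr (dvd_zero b)
  rcases eq_zero_or_unit_mul b with rfl | ⟨i', hi', u', hu', rfl⟩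
  · exact Or.inl (dvd_zero _)
  obtain ⟨c, hc, -⟩ := isUnit_iff_exists.mp hu
  obtain ⟨c', hc', -⟩ := isUnit_iff_exists.mp hu'
  rcases le_total i i' with h | h
  · refine Or.inl ⟨c * (xq K n) ^ (i' - i) * u', ?_⟩
    have : (xq K n) ^ i * (xq K n) ^ (i' - i) = (xq K n) ^ i' := by
      rw [← pow_add]; congr 1; omega
    calc (xq K n) ^ i' * u' = ((xq K n) ^ i * (xq K n) ^ (i' - i)) * ((u * c) * u') := by
          rw [this, hc, one_mul]
      _ = (xq K n) ^ i * u * (c * (xq K n) ^ (i' - i) * u') := by ring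
  · refine Or.inr ⟨c' * (xq K n) ^ (i - i') * u, ?_⟩
    have : (xq K n) ^ i' * (xq K n) ^ (i - i') = (xq K n) ^ i := by
      rw [← pow_add]; congr 1; omega
    calc (xq K n) ^ i * u = ((xq K n) ^ i' * (xq K n) ^ (i - i')) * ((u' * c') * u) := by
          rw [this, hc', one_mul]
      _ = (xq K n) ^ i' * u' * (c' * (xq K n) ^ (i - i') * u) := by ring


lemma ker_eq (hn : 2 ≤ n) :
    LinearMap.ker (LinearMap.toSpanSingleton (Aq K n) (Aq K n)
        (Ideal.Quotient.mk (Ideal.span {(X : K[X]) ^ n}) (X ^ (n - 1)))) =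
      Ideal.span {xq K n} := by
  ext a
  rw [LinearMap.mem_ker, LinearMap.toSpanSingleton_apply, Ideal.mem_span_singleton]
  rw [map_pow, smul_eq_mul]
  constructor
  · intro h
    obtain ⟨b, hb⟩ := div_of_pow_mul_eq_zero (j := n - 1) (by omega) a (by rw [mul_comm]; exact h)
    have h1 : n - (n - 1) = 1 := by omega
    rw [h1, pow_one] at hb
    exact ⟨b, hb⟩
  · rintro ⟨b, rfl⟩
    calc xq K n * b * xq K n ^ (n - 1) = (xq K n * xq K n ^ (n - 1)) * b := by ring
      _ = 0 := by
          rw [← pow_succ']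
          have h1 : n - 1 + 1 = n := by omega
          rw [h1, xpow_n_eq_zero, zero_mul]

/-- The key divisibility property of a module over `Aq K n`. -/
def Clean (K : Type u) [Field K] (n : ℕ) (M : Type u) [AddCommGroup M]
    [Module (Aq K n) M] : Prop :=
  ∀ j, j ≤ n → ∀ v : M, (xq K n) ^ j • v = 0 → ∃ u : M, v = (xq K n) ^ (n - j) • u

/-- Existence of an element of order exactly `x^j` not divisible appropriately. -/
def Tor (K : Type u) [Field K] (n : ℕ) (j : ℕ) (M : Type u) [AddCommGroup M]
    [Module (Aq K n) M] : Prop :=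
  ∃ m : M, (xq K n) ^ j • m = 0 ∧ ∀ m' : M, (xq K n) ^ (j - 1) • m ≠ (xq K n) ^ j • m'

lemma clean_finsupp (ι : Type u) : Clean K n (ι →₀ Aq K n) := by
  intro j hj v h
  induction v using Finsupp.induction with
  | zero => exact ⟨0, by simp⟩
  | single_add i a f hif ha0 ih =>
    have hcoord : ∀ i' : ι, (xq K n) ^ j * ((Finsupp.single i a + f) i') = 0 := by
      intro i'
      have h2 := DFunLike.congr_fun h i'
      rw [Finsupp.smul_apply, smul_eq_mul, Finsupp.coe_zero, Pi.zero_apply] at h2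
      exact h2
    have hfa : (xq K n) ^ j * a = 0 := by
      have := hcoord i
      simpa [Finsupp.notMem_support_iff.mp hif] using this
    have hf0 : (xq K n) ^ j • f = 0 := by
      ext i'
      by_cases hii : i' = i
      · subst hii
        simp [Finsupp.notMem_support_iff.mp hif]
      · have := hcoord i'
        simpa [Finsupp.single_eq_of_ne hii, smul_eq_mul] using this
    obtain ⟨b, hb⟩ := div_of_pow_mul_eq_zero hj a hfa
    obtain ⟨u, hu⟩ := ih hf0
    refine ⟨Finsupp.single i b + u, ?_⟩
    rw [smul_add, Finsupp.smul_single, hu, hb, smul_eq_mul]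

lemma clean_projective {M : Type u} [AddCommGroup M] [Module (Aq K n) M]
    (hp : Module.Projective (Aq K n) M) {j : ℕ} (hj1 : 1 ≤ j) (hj2 : j ≤ n - 1)
    (hn : 2 ≤ n) : ¬ Tor K n j M := by
  rintro ⟨m, hm0, hm⟩
  obtain ⟨s, hs⟩ := hp.out
  obtain ⟨u, hu⟩ := clean_finsupp M j (by omega) (s m) (by
    calc (xq K n) ^ j • s m = s ((xq K n) ^ j • m) := (s.map_smul _ _).symm
      _ = s 0 := by rw [hm0]
      _ = 0 := map_zero s)
  set L := Finsupp.linearCombination (Aq K n) (id : M → M) with hL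
  have hm' : m = (xq K n) ^ (n - j) • L u := by
    calc m = L (s m) := (hs m).symm
      _ = L ((xq K n) ^ (n - j) • u) := congrArg L hu
      _ = (xq K n) ^ (n - j) • L u := L.map_smul _ _
  apply hm ((xq K n) ^ (n - 1 - j) • L u)
  rw [hm', smul_smul, smul_smul, ← pow_add, ← pow_add]
  congr 2
  omega

lemma tor_ker {M F : Type u} [AddCommGroup M] [Module (Aq K n) M]
    [AddCommGroup F] [Module (Aq K n) F] (hcl : Clean K n F) (hn : 2 ≤ n)
    {j : ℕ} (hj1 : 1 ≤ j) (hj2 : j ≤ n - 1)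
    (f : F →ₗ[Aq K n] M) (hf : Function.Surjective f) (ht : Tor K n j M) :
    Tor K n (n - j) (LinearMap.ker f) := by
  obtain ⟨m, hm0, hm⟩ := ht
  obtain ⟨v, hv⟩ := hf m
  have hk0 : f ((xq K n) ^ j • v) = 0 := by
    calc f ((xq K n) ^ j • v) = (xq K n) ^ j • f v := f.map_smul _ _
      _ = (xq K n) ^ j • m := by rw [hv]
      _ = 0 := hm0
  refine ⟨⟨(xq K n) ^ j • v, hk0⟩, ?_, ?_⟩
  · apply Subtype.ext
    show (xq K n) ^ (n - j) • ((xq K n) ^ j • v) = 0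
    rw [smul_smul, ← pow_add]
    have h1 : n - j + j = n := by omega
    rw [h1, xpow_n_eq_zero]
    exact zero_smul (Aq K n) v
  · rintro ⟨w, hw⟩ heq
    have heq' : (xq K n) ^ (n - j - 1) • ((xq K n) ^ j • v) = (xq K n) ^ (n - j) • w :=
      Subtype.ext_iff.mp heq
    rw [smul_smul, ← pow_add] at heq'
    have h1 : n - j - 1 + j = n - 1 := by omega
    rw [h1] at heq'
    have hz : (xq K n) ^ (n - j) • ((xq K n) ^ (j - 1) • v - w) = 0 := by
      rw [smul_sub, smul_smul, ← pow_add]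
      have h2 : n - j + (j - 1) = n - 1 := by omega
      rw [h2, ← heq', sub_self]
    obtain ⟨u, hu⟩ := hcl (n - j) (by omega) _ hz
    have h3 : n - (n - j) = j := by omega
    rw [h3] at hu
    apply hm (f u)
    calc (xq K n) ^ (j - 1) • m = (xq K n) ^ (j - 1) • f v := by rw [hv]
      _ = f ((xq K n) ^ (j - 1) • v) := (f.map_smul _ _).symm
      _ = f ((xq K n) ^ (j - 1) • v) - f w := by rw [LinearMap.mem_ker.mp hw, sub_zero]
      _ = f ((xq K n) ^ (j - 1) • v - w) := (map_sub f _ _).symm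
      _ = f ((xq K n) ^ j • u) := congrArg f hu
      _ = (xq K n) ^ j • f u := f.map_smul _ _

lemma not_projdim (hn : 2 ≤ n) (d : ℕ) :
    ∀ (M : Type u) [AddCommGroup M] [Module (Aq K n) M],
    (∃ j, 1 ≤ j ∧ j ≤ n - 1 ∧ Tor K n j M) → ¬ ProjDimLE (Aq K n) d M := by
  induction d with
  | zero =>
    rintro M _ _ ⟨j, hj1, hj2, ht⟩ hp
    exact clean_projective hp hj1 hj2 hn ht
  | succ d ih =>
    rintro M _ _ ⟨j, hj1, hj2, ht⟩ hp
    obtain ⟨ι, f, hf, hker⟩ := hp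
    refine ih (LinearMap.ker f) ⟨n - j, by omega, by omega, ?_⟩ hker
    exact tor_ker (clean_finsupp ι) hn hj1 hj2 f hf ht

lemma npres (A : Type u) [CommRing A] [IsNoetherianRing A] :
    ∀ (k : ℕ) (M : Type u) [AddCommGroup M] [Module A M], Module.Finite A M →
      IsNPresented A k M := by
  intro k
  induction k with
  | zero => intro M _ _ hfin; exact hfin
  | succ k ih =>
    intro M _ _ hfin
    obtain ⟨r, f, hf⟩ := Module.Finite.exists_fin' A M
    refine ⟨r, f, hf, ?_⟩
    exact ih _ (Module.Finite.iff_fg.mpr (IsNoetherian.noetherian _))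

end Stmt17Aux

open Polynomial in
set_option synthInstance.maxHeartbeats 1000000 in
/-- For a field `K` and `n ≥ 2`, `A = K[x]/(x^n)` is a valuation ring, the
annihilator of `x^(n-1)` in `A` is the principal ideal generated by `x`, and `A` is
not a `(2,d)`-ring for any `d`. -/
theorem stmt17 (K : Type u) [Field K] (n : ℕ) (hn : 2 ≤ n) :
    (∀ a b : K[X] ⧸ Ideal.span {(X : K[X]) ^ n}, a ∣ b ∨ b ∣ a) ∧
      (LinearMap.ker (LinearMap.toSpanSingleton
          (K[X] ⧸ Ideal.span {(X : K[X]) ^ n}) (K[X] ⧸ Ideal.span {(X : K[X]) ^ n})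
          (Ideal.Quotient.mk (Ideal.span {(X : K[X]) ^ n}) (X ^ (n - 1)))) =
        Ideal.span {Ideal.Quotient.mk (Ideal.span {(X : K[X]) ^ n}) X}) ∧
      ∀ d : ℕ, ¬ ∀ (M : Type u) [AddCommGroup M]
          [Module (K[X] ⧸ Ideal.span {(X : K[X]) ^ n}) M],
        IsNPresented (K[X] ⧸ Ideal.span {(X : K[X]) ^ n}) 2 M →
          ProjDimLE (K[X] ⧸ Ideal.span {(X : K[X]) ^ n}) d M := by
  refine ⟨Stmt17Aux.dvd_total, Stmt17Aux.ker_eq hn, ?_⟩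
  intro d h
  set I : Ideal (Stmt17Aux.Aq K n) := Ideal.span {Stmt17Aux.xq K n} with hI
  have hfin : Module.Finite (Stmt17Aux.Aq K n) (Stmt17Aux.Aq K n ⧸ I) := by
    infer_instance
  have htor : Stmt17Aux.Tor K n 1 (Stmt17Aux.Aq K n ⧸ I) := by
    have h1 : (Stmt17Aux.xq K n) ^ 1 •
        (Submodule.Quotient.mk (1 : Stmt17Aux.Aq K n) : Stmt17Aux.Aq K n ⧸ I) = 0 := by
      rw [pow_one, ← Submodule.Quotient.mk_smul, Submodule.Quotient.mk_eq_zero]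
      rw [smul_eq_mul, mul_one, hI]
      exact Ideal.subset_span rfl
    refine ⟨Submodule.Quotient.mk 1, h1, ?_⟩
    intro m' heq
    obtain ⟨a, rfl⟩ := Submodule.Quotient.mk_surjective I m'
    rw [pow_zero, one_smul, pow_one, ← Submodule.Quotient.mk_smul] at heq
    rw [Submodule.Quotient.eq] at heq
    rw [hI] at heq
    have heq' := Ideal.mem_span_singleton.mp heq
    obtain ⟨c, hc⟩ := heq'
    rw [smul_eq_mul] at hc
    have hone : (1 : Stmt17Aux.Aq K n) = Stmt17Aux.xq K n * (a + c) := by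
      linear_combination hc
    have hzero : (Stmt17Aux.xq K n) ^ (n - 1) = 0 := by
      calc (Stmt17Aux.xq K n) ^ (n - 1) = (Stmt17Aux.xq K n) ^ (n - 1) * 1 := (mul_one _).symm
        _ = (Stmt17Aux.xq K n) ^ (n - 1) * (Stmt17Aux.xq K n * (a + c)) := by rw [← hone]
        _ = (Stmt17Aux.xq K n) ^ (n - 1) * Stmt17Aux.xq K n * (a + c) := by ring
        _ = (Stmt17Aux.xq K n) ^ n * (a + c) := by
            rw [← pow_succ]
            congr 2
            omega
        _ = 0 := by rw [Stmt17Aux.xpow_n_eq_zero, zero_mul]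
    exact Stmt17Aux.xpow_ne_zero (by omega) hzero
  refine Stmt17Aux.not_projdim hn d _ ⟨1, le_refl 1, by omega, htor⟩ ?_
  exact h _ (Stmt17Aux.npres _ 2 _ hfin)
end

section
/- Let A be an arithmetical ring such that for every maximal ideal m of A and every nonzero zero-divisor x of the localization A_m, the annihilator (0:x) in A_m is not finitely generated. Then every 3-presented A-module has projective dimension at most 1 (A is a (3,1)-ring). -/
universe u

open Submodule LinearMap

lemma myFpEquiv {R : Type u} [CommRing R] {M N : Type*} [AddCommGroup M] [Module R M]
    [AddCommGroup N] [Module R N] [Module.FinitePresentation R M] (e : M ≃ₗ[R] N) :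
    Module.FinitePresentation R N :=
  Module.finitePresentation_of_surjective e.toLinearMap e.surjective
    (by rw [LinearMap.ker_eq_bot.mpr e.injective]; exact Submodule.fg_bot)

lemma myExistsDvdAll {R : Type u} [CommRing R] (hdvd : ∀ a b : R, a ∣ b ∨ b ∣ a)
    (s : Finset R) (hs : s.Nonempty) : ∃ x ∈ s, ∀ y ∈ s, x ∣ y := by
  classical
  induction s using Finset.cons_induction with
  | empty => exact absurd hs (by simp)
  | cons a t ha ih =>
    rcases t.eq_empty_or_nonempty with rfl | ht
    · exact ⟨a, by simp⟩
    · obtain ⟨x, hx, hxall⟩ := ih ht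
      rcases hdvd a x with h | h
      · refine ⟨a, by simp, ?_⟩
        intro y hy
        rcases Finset.mem_cons.mp hy with rfl | hy
        · exact dvd_rfl
        · exact h.trans (hxall y hy)
      · refine ⟨x, Finset.mem_cons_of_mem hx, ?_⟩
        intro y hy
        rcases Finset.mem_cons.mp hy with rfl | hy
        · exact h
        · exact hxall y hy

theorem myAuxFree {R : Type u} [CommRing R]
    (hdvd : ∀ a b : R, a ∣ b ∨ b ∣ a)
    (hann : ∀ x : R, x ≠ 0 → (∃ y : R, y ≠ 0 ∧ x * y = 0) →
      ¬ (LinearMap.ker (LinearMap.toSpanSingleton R R x)).FG) :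
    ∀ (m n : ℕ) (g : Fin m → Fin n → R),
      Module.FinitePresentation R (Submodule.span R (Set.range g)) →
      Module.Free R (Submodule.span R (Set.range g)) := by
  intro m
  induction m with
  | zero =>
    intro n g _
    rw [show Submodule.span R (Set.range g) = ⊥ from Submodule.span_eq_bot.mpr
      (by rintro x ⟨i, rfl⟩; exact absurd i.pos (by simp))]
    infer_instance
  | succ m ih =>
    intro n g fp
    classical
    haveI := fp
    by_cases h0 : ∀ i j, g i j = 0
    · rw [show Submodule.span R (Set.range g) = ⊥ from Submodule.span_eq_bot.mpr
        (by rintro x ⟨i, rfl⟩; exact funext fun j => h0 i j)]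
      infer_instance
    push_neg at h0
    -- pick a minimal nonzero entry `c` dividing all entries
    set s : Finset R :=
      (Finset.univ.image fun p : Fin (m+1) × Fin n => g p.1 p.2).filter (· ≠ 0) with hs_def
    have hsne : s.Nonempty := by
      obtain ⟨i, j, hij⟩ := h0
      exact ⟨g i j, by simp [hs_def, Finset.mem_filter, hij]⟩
    obtain ⟨c, hcs, hcdvd⟩ := myExistsDvdAll hdvd s hsne
    have hc0 : c ≠ 0 := (Finset.mem_filter.mp hcs).2
    obtain ⟨⟨i0, j0⟩, -, hc⟩ := Finset.mem_image.mp (Finset.mem_filter.mp hcs).1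
    have hdall : ∀ i j, c ∣ g i j := by
      intro i j
      by_cases h : g i j = 0
      · simp [h]
      · exact hcdvd _ (by simp [hs_def, Finset.mem_filter, h])
    choose r hr using fun i => hdall i j0
    choose q hq using fun j => hdall i0 j

    set w : Fin n → R := Function.update q j0 0 with hw_def
    have hw0 : w j0 = 0 := Function.update_self _ _ _
    have hwq : ∀ j, j ≠ j0 → w j = q j := fun j hj => Function.update_of_ne hj _ _
    set sm : (Fin n → R) →ₗ[R] (Fin n → R) :=
      (LinearMap.proj j0 : (Fin n → R) →ₗ[R] R).smulRight w with hsm_def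
    have hsm_app : ∀ v : Fin n → R, sm v = v j0 • w := fun v => rfl
    have hsm2 : ∀ v : Fin n → R, sm (sm v) = 0 := by
      intro v
      rw [hsm_app, hsm_app]
      have : (v j0 • w) j0 = 0 := by simp [hw0]
      rw [this, zero_smul]
    set T : (Fin n → R) ≃ₗ[R] (Fin n → R) :=
      LinearEquiv.ofLinear (LinearMap.id - sm) (LinearMap.id + sm)
        (by ext v; simp [LinearMap.sub_apply, LinearMap.add_apply, map_add, hsm2])
        (by ext v; simp [LinearMap.sub_apply, LinearMap.add_apply, map_sub, hsm2])
      with hT_def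
    have hT_app : ∀ v : Fin n → R, T v = v - v j0 • w := fun v => rfl
    have hTfix : ∀ v : Fin n → R, v j0 = 0 → T v = v := by
      intro v hv; rw [hT_app, hv, zero_smul, sub_zero]
    have hTy : T (g i0) = Pi.single j0 c := by
      rw [hT_app]
      funext j
      by_cases hj : j = j0
      · subst hj
        simp [hc, hw0, Pi.single_eq_same]
      · have : (g i0 - g i0 j0 • w) j = g i0 j - g i0 j0 * w j := rfl
        rw [this, hwq j hj, hc, hq j, Pi.single_eq_of_ne hj]
        ring
    set g1 : Fin (m+1) → Fin n → R :=
      fun i => if i = i0 then g i0 else g i - r i • g i0 with hg1_def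
    have hg1i0 : g1 i0 = g i0 := if_pos rfl
    have hg1ne : ∀ i, i ≠ i0 → g1 i = g i - r i • g i0 := fun i hi => if_neg hi
    have hg1j0 : ∀ i, i ≠ i0 → g1 i j0 = 0 := by
      intro i hi
      rw [hg1ne i hi]
      have : (g i - r i • g i0) j0 = g i j0 - r i * g i0 j0 := rfl
      rw [this, hr i, hc]
      ring
    have hspan : Submodule.span R (Set.range g1) = Submodule.span R (Set.range g) := by
      apply le_antisymm <;> rw [Submodule.span_le] <;> rintro x ⟨i, rfl⟩
      · by_cases hi : i = i0
        · rw [hi, hg1i0]; exact Submodule.subset_span ⟨i0, rfl⟩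
        · rw [hg1ne i hi]
          exact sub_mem (Submodule.subset_span ⟨i, rfl⟩)
            (Submodule.smul_mem _ _ (Submodule.subset_span ⟨i0, rfl⟩))
      · by_cases hi : i = i0
        · rw [hi, ← hg1i0]; exact Submodule.subset_span ⟨i0, rfl⟩
        · have : g i = g1 i + r i • g1 i0 := by
            rw [hg1ne i hi, hg1i0, sub_add_cancel]
          rw [this]
          exact add_mem (Submodule.subset_span ⟨i, rfl⟩)
            (Submodule.smul_mem _ _ (Submodule.subset_span ⟨i0, rfl⟩))
    set C := Submodule.span R (Set.range g) with hC_def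
    set C2 := Submodule.span R (Set.range fun i : Fin m => g1 (i0.succAbove i)) with hC2_def
    have hC2le : ∀ y : Fin n → R, y ∈ C2 → y j0 = 0 := by
      have : C2 ≤ LinearMap.ker (LinearMap.proj j0 : (Fin n → R) →ₗ[R] R) := by
        rw [hC2_def, Submodule.span_le]
        rintro x ⟨i, rfl⟩
        exact hg1j0 _ (Fin.succAbove_ne i0 i)
      exact fun y hy => this hy
    have hTrange : Set.range (⇑T ∘ g1)
        = insert (Pi.single j0 c) (Set.range fun i : Fin m => g1 (i0.succAbove i)) := by
      ext x
      constructor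
      · rintro ⟨i, rfl⟩
        by_cases hi : i = i0
        · refine Set.mem_insert_iff.mpr (Or.inl ?_)
          show T (g1 i) = _
          rw [hi, hg1i0, hTy]
        · refine Set.mem_insert_iff.mpr (Or.inr ?_)
          obtain ⟨jj, hjj⟩ := Fin.exists_succAbove_eq hi
          refine ⟨jj, ?_⟩
          show g1 (i0.succAbove jj) = T (g1 i)
          rw [hjj, hTfix _ (hg1j0 i hi)]
      · rintro (rfl | ⟨i, rfl⟩)
        · refine ⟨i0, ?_⟩
          show T (g1 i0) = _
          rw [hg1i0, hTy]
        · refine ⟨i0.succAbove i, ?_⟩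
          show T (g1 (i0.succAbove i)) = g1 (i0.succAbove i)
          exact hTfix _ (hg1j0 _ (Fin.succAbove_ne i0 i))
    set D := C.map T.toLinearMap with hD_def
    have hD : D = (R ∙ Pi.single j0 c) ⊔ C2 := by
      rw [hD_def, ← hspan, Submodule.map_span, ← Set.range_comp]
      simp only [LinearEquiv.coe_coe]
      rw [hTrange, Submodule.span_insert]
    let ED : C ≃ₗ[R] D := Submodule.equivMapOfInjective T.toLinearMap T.injective C
    haveI fpD : Module.FinitePresentation R D := myFpEquiv ED
    haveI : Module.Finite R C2 := Module.Finite.span_of_finite R (Set.finite_range _)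
    set Φ : R × C2 →ₗ[R] (Fin n → R) :=
      (LinearMap.toSpanSingleton R _ (Pi.single j0 c)).coprod C2.subtype with hΦ_def
    have hΦrange : LinearMap.range Φ = D := by
      rw [hΦ_def, LinearMap.range_coprod, Submodule.range_subtype,
        ← LinearMap.span_singleton_eq_range, hD]
    have hΦ_app : ∀ p : R × C2, Φ p = p.1 • (Pi.single j0 c : Fin n → R) + (p.2 : Fin n → R) := fun p => rfl
    have hsingle : ∀ a : R, a • (Pi.single j0 c : Fin n → R) = Pi.single j0 (a * c) := by
      intro a
      rw [← Pi.single_smul, smul_eq_mul]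
    have hΦj0 : ∀ p : R × C2, Φ p j0 = p.1 * c := by
      intro p
      rw [hΦ_app]
      have : (p.1 • (Pi.single j0 c : Fin n → R) + (p.2 : Fin n → R)) j0
          = (p.1 • (Pi.single j0 c : Fin n → R)) j0 + (p.2 : Fin n → R) j0 := rfl
      rw [this, hC2le _ p.2.2, add_zero, hsingle, Pi.single_eq_same]
    haveI fpRange : Module.FinitePresentation R (LinearMap.range Φ) := by
      rw [hΦrange]; exact fpD
    have hker : (LinearMap.ker Φ).FG := by
      rw [← LinearMap.ker_rangeRestrict]
      exact Module.FinitePresentation.fg_ker _ Φ.surjective_rangeRestrict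
    have hann_fg : (LinearMap.ker (LinearMap.toSpanSingleton R R c)).FG := by
      have heq : LinearMap.ker (LinearMap.toSpanSingleton R R c)
          = (LinearMap.ker Φ).map (LinearMap.fst R R C2) := by
        apply le_antisymm
        · intro x hx
          have hx' : x * c = 0 := by
            have := LinearMap.mem_ker.mp hx
            rwa [LinearMap.toSpanSingleton_apply, smul_eq_mul] at this
          refine ⟨(x, 0), LinearMap.mem_ker.mpr ?_, rfl⟩
          rw [hΦ_app]
          simp [hsingle, hx']
        · rintro x ⟨⟨a, y⟩, hmem, rfl⟩
          have : Φ (a, y) = 0 := LinearMap.mem_ker.mp hmem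
          have h1 : a * c = 0 := by rw [← hΦj0 (a, y), this]; rfl
          exact LinearMap.mem_ker.mpr (by rw [LinearMap.toSpanSingleton_apply, smul_eq_mul]; exact h1)
      rw [heq]
      exact hker.map _
    have hcnzd : ∀ z : R, c * z = 0 → z = 0 := by
      intro z hz
      by_contra hz0
      exact hann c hc0 ⟨z, hz0, hz⟩ hann_fg
    have hΦinj : Function.Injective Φ := by
      rw [← LinearMap.ker_eq_bot, eq_bot_iff]
      rintro ⟨a, y⟩ hmem
      have h0' : Φ (a, y) = 0 := LinearMap.mem_ker.mp hmem
      have h1 : a * c = 0 := by rw [← hΦj0 (a, y), h0']; rfl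
      have ha : a = 0 := hcnzd a (by rwa [mul_comm])
      have hy : (y : Fin n → R) = 0 := by
        have := hΦ_app (a, y)
        rw [h0', ha, zero_smul, zero_add] at this
        exact this.symm
      rw [Submodule.mem_bot]
      exact Prod.ext ha (Subtype.ext (by simpa using hy))
    let E3 : (R × C2) ≃ₗ[R] D :=
      (LinearEquiv.ofInjective Φ hΦinj).trans (LinearEquiv.ofEq _ _ hΦrange)
    haveI fpC2 : Module.FinitePresentation R C2 := by
      apply Module.finitePresentation_of_surjective
        ((LinearMap.snd R R C2) ∘ₗ E3.symm.toLinearMap)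
      · intro y
        exact ⟨E3 (0, y), by simp⟩
      · rw [LinearMap.ker_comp, LinearMap.ker_snd]
        have : Submodule.comap E3.symm.toLinearMap (LinearMap.range (LinearMap.inl R R C2))
            = Submodule.map E3.toLinearMap (LinearMap.range (LinearMap.inl R R C2)) := by
          rw [show E3.symm.toLinearMap = (E3.symm : ↥D ≃ₛₗ[RingHom.id R] R × ↥C2).toLinearMap from rfl,
            Submodule.comap_equiv_eq_map_symm, LinearEquiv.symm_symm]
        rw [this, ← Submodule.map_top (LinearMap.inl R R C2)]
        exact (Module.Finite.fg_top.map _).map _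
    haveI freeC2 : Module.Free R C2 := ih n (fun i : Fin m => g1 (i0.succAbove i)) fpC2
    exact Module.Free.of_equiv ((ED.trans E3.symm).symm : (R × C2) ≃ₗ[R] C)

theorem myFreeOfEmbed {R : Type u} [CommRing R]
    (hdvd : ∀ a b : R, a ∣ b ∨ b ∣ a)
    (hann : ∀ x : R, x ≠ 0 → (∃ y : R, y ≠ 0 ∧ x * y = 0) →
      ¬ (LinearMap.ker (LinearMap.toSpanSingleton R R x)).FG)
    {n : ℕ} {M : Type*} [AddCommGroup M] [Module R M] [Module.FinitePresentation R M]
    (ι : M →ₗ[R] (Fin n → R)) (hι : Function.Injective ι) : Module.Free R M := by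
  have e : M ≃ₗ[R] LinearMap.range ι := LinearEquiv.ofInjective ι hι
  haveI : Module.FinitePresentation R (LinearMap.range ι) := myFpEquiv e
  have hfg : (LinearMap.range ι).FG := Module.Finite.iff_fg.mp inferInstance
  obtain ⟨m, gfam, hspan⟩ := Submodule.fg_iff_exists_fin_generating_family.mp hfg
  haveI : Module.FinitePresentation R (Submodule.span R (Set.range gfam)) := by
    rw [hspan]; infer_instance
  have hfree := myAuxFree hdvd hann m n gfam this
  rw [hspan] at hfree
  haveI := hfree
  exact Module.Free.of_equiv e.symm

section PiLoc

variable {A : Type u} [CommRing A] (S : Submonoid A)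

noncomputable def myPiLoc (k : ℕ) : (Fin k → A) →ₗ[A] (Fin k → Localization S) :=
  LinearMap.pi fun i => (Algebra.linearMap A (Localization S)).comp (LinearMap.proj i)

lemma myPiLoc_apply (k : ℕ) (v : Fin k → A) (i : Fin k) :
    myPiLoc S k v i = algebraMap A (Localization S) (v i) := rfl

lemma myPiLoc_isLocalized (k : ℕ) : IsLocalizedModule S (myPiLoc S k) := by
  classical
  constructor
  · intro s
    rw [Module.End.isUnit_iff]
    obtain ⟨u, hueq⟩ : IsUnit (algebraMap A (Localization S) (s : A)) :=
      IsLocalization.map_units (Localization S) s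
    constructor
    · intro x y hxy
      rw [Module.algebraMap_end_apply, Module.algebraMap_end_apply] at hxy
      funext i
      have h1 : (s : A) • x i = (s : A) • y i := congrFun hxy i
      rw [Algebra.smul_def, Algebra.smul_def, ← hueq] at h1
      exact (Units.mul_right_inj u).mp h1
    · intro z
      refine ⟨fun i => ↑u⁻¹ * z i, ?_⟩
      rw [Module.algebraMap_end_apply]
      funext i
      show (s : A) • (↑u⁻¹ * z i) = z i
      rw [Algebra.smul_def, ← hueq, ← mul_assoc, u.mul_inv, one_mul]
  · intro y
    choose p hp using fun i => IsLocalization.surj (M := S) (S := Localization S) (y i)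
    set a : Fin k → A := fun i => (p i).1 with ha_def
    set s' : Fin k → S := fun i => (p i).2 with hs'_def
    have has : ∀ i, y i * algebraMap A (Localization S) ((s' i : A)) = algebraMap A (Localization S) (a i) :=
      fun i => hp i
    refine ⟨⟨fun i => (∏ j ∈ Finset.univ.erase i, (s' j : A)) * a i, ∏ j, s' j⟩, ?_⟩
    funext i
    show (∏ j, s' j : S) • y i
        = algebraMap A (Localization S) ((∏ j ∈ Finset.univ.erase i, (s' j : A)) * a i)
    have hcoe : ((∏ j, s' j : S) : A) = ∏ j, (s' j : A) := by
      simp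
    rw [Submonoid.smul_def, Algebra.smul_def, hcoe,
      ← Finset.prod_erase_mul Finset.univ _ (Finset.mem_univ i), map_mul, map_mul, mul_assoc,
      mul_comm ((algebraMap A (Localization S)) (s' i : A)) (y i), has i]
  · intro x₁ x₂ h
    choose cc hcc using fun i =>
      (IsLocalization.eq_iff_exists S (Localization S)).mp (congrFun h i)
    simp only [LinearMap.proj_apply] at hcc
    refine ⟨∏ j, cc j, ?_⟩
    funext i
    show ((∏ j, cc j : S) : A) • x₁ i = ((∏ j, cc j : S) : A) • x₂ i
    have hcoe : ((∏ j, cc j : S) : A) = ∏ j, (cc j : A) := by simp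
    rw [smul_eq_mul, smul_eq_mul, hcoe,
      ← Finset.prod_erase_mul Finset.univ _ (Finset.mem_univ i), mul_assoc, mul_assoc, hcc i]

end PiLoc

/-- Let `A` be an arithmetical ring (every localization at a maximal ideal is a
valuation ring) such that for every maximal ideal `m` and every nonzero zero-divisor
`x` of `A_m`, the annihilator of `x` in `A_m` is not finitely generated.  Then every
`3`-presented `A`-module has projective dimension at most `1`. -/
theorem stmt18 (A : Type u) [CommRing A]
    (harith : ∀ (m : Ideal A) (hm : m.IsMaximal),
      ∀ a b : Localization.AtPrime m, a ∣ b ∨ b ∣ a)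
    (hann : ∀ (m : Ideal A) (hm : m.IsMaximal), ∀ x : Localization.AtPrime m,
      x ≠ 0 → (∃ y : Localization.AtPrime m, y ≠ 0 ∧ x * y = 0) →
      ¬ (LinearMap.ker (LinearMap.toSpanSingleton (Localization.AtPrime m)
          (Localization.AtPrime m) x)).FG) :
    ∀ (M : Type u) [AddCommGroup M] [Module A M],
      IsNPresented A 3 M → ProjDimLE A 1 M := by
  intro M _ _ h3
  obtain ⟨k, f, hf, h2⟩ := h3
  obtain ⟨j, gp, hgp, h1⟩ := h2
  obtain ⟨i, hp, hhp, -⟩ := h1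
  -- the kernel of `f` is finitely presented
  haveI hkfg : Module.Finite A (LinearMap.ker gp) := Module.Finite.of_surjective hp hhp
  haveI hfpK : Module.FinitePresentation A (LinearMap.ker f) :=
    Module.finitePresentation_of_surjective gp hgp (Module.Finite.iff_fg.mp hkfg)
  -- the kernel of `f` is projective
  haveI hprojK : Module.Projective A (LinearMap.ker f) := by
    apply Module.projective_of_localization_maximal
    intro P hP
    haveI : IsLocalizedModule P.primeCompl (myPiLoc P.primeCompl k) :=
      myPiLoc_isLocalized P.primeCompl k
    let ι0 : LocalizedModule P.primeCompl (LinearMap.ker f)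
        →ₗ[Localization P.primeCompl] LocalizedModule P.primeCompl (Fin k → A) :=
      LocalizedModule.map P.primeCompl (LinearMap.ker f).subtype
    let e : LocalizedModule P.primeCompl (Fin k → A) ≃ₗ[A] (Fin k → Localization P.primeCompl) :=
      IsLocalizedModule.iso P.primeCompl (myPiLoc P.primeCompl k)
    let ι1 : LocalizedModule P.primeCompl (LinearMap.ker f)
        →ₗ[A] (Fin k → Localization P.primeCompl) :=
      e.toLinearMap ∘ₗ (ι0.restrictScalars A)
    have hinj1 : Function.Injective ι1 :=
      e.injective.comp (LocalizedModule.map_injective P.primeCompl _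
        (Submodule.injective_subtype _))
    let ι2 := ι1.extendScalarsOfIsLocalization P.primeCompl (Localization P.primeCompl)
    have hinj2 : Function.Injective ι2 := hinj1
    haveI hfree : Module.Free (Localization P.primeCompl)
        (LocalizedModule P.primeCompl (LinearMap.ker f)) :=
      by
        have hfp : Module.FinitePresentation (Localization P.primeCompl) (LocalizedModule P.primeCompl (LinearMap.ker f)) := inferInstance
        exact myFreeOfEmbed (R := Localization P.primeCompl) (M := LocalizedModule P.primeCompl (LinearMap.ker f)) (harith P hP) (hann P hP) ι2 hinj2
    infer_instance
  -- assemble the projective resolution of length 1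
  let E : (ULift.{u} (Fin k) →₀ A) ≃ₗ[A] (Fin k → A) :=
    (Finsupp.domLCongr (Equiv.ulift)).trans (Finsupp.linearEquivFunOnFinite A A (Fin k))
  refine ⟨ULift.{u} (Fin k), f ∘ₗ E.toLinearMap, hf.comp E.surjective, ?_⟩
  show Module.Projective A (LinearMap.ker (f ∘ₗ E.toLinearMap))
  have hker : LinearMap.ker (f ∘ₗ E.toLinearMap)
      = Submodule.map E.symm.toLinearMap (LinearMap.ker f) := by
    rw [LinearMap.ker_comp]
    exact Submodule.comap_equiv_eq_map_symm _ _
  haveI := Module.Projective.of_equiv (E.symm.submoduleMap (LinearMap.ker f))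
  exact Module.Projective.of_equiv (LinearEquiv.ofEq _ _ hker.symm)
end
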